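/- arXiv:2601.20855 — 4 statements merged into one kernel-verified Lean document; each statement's English description precedes it below -/
import Mathlib

section
/- Let α be irrational and f : 𝕋 → 𝕋 a measurable coboundary over rotation by α, with f = F∘T_α − F for measurable F. Fix k ≥ 1 and 0 < j ≤ k. Then the skew product T on 𝕋^k given by T(x_1,…,x_k) = (x_1+α, x_2+x_1, …, x_j+x_{j−1}, x_{j+1}+f(x_1)+x_j, x_{j+2}+x_{j+1}, …, x_k+x_{k−1}) is measurably isomorphic to S(x_1,…,x_k) = (x_1+α, x_2+x_1, …, x_k+x_{k−1}) on (𝕋^k, Haar), provided that additionally F = G_2∘T_α − G_2, G_2 = G_3∘T_α − G_3, …, G_{k−j−1} = G_{k−j}∘T_α − G_{k−j} for measurable G_i : 𝕋 → 𝕋 (taking G_1 = F). The isomorphism is π(x_1,…,x_k) = (x_1, …, x_j, x_{j+1} − G_1(x_1), x_{j+2} − G_2(x_1), …, x_k − G_{k−j}(x_1)). -/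
open MeasureTheory

lemma aux_mp {n : ℕ} (c : Fin (n+1) → AddCircle (1:ℝ) → AddCircle (1:ℝ))
    (hcm : ∀ i, Measurable (c i)) (hc0 : ∀ t, c 0 t = 0) :
    MeasurePreserving (fun (x : Fin (n+1) → AddCircle (1:ℝ)) i => x i - c i (x 0))
      volume volume := by
  let e := MeasurableEquiv.piFinSuccAbove (fun _ : Fin (n+1) => AddCircle (1:ℝ)) 0
  have he : MeasurePreserving e volume volume :=
    volume_preserving_piFinSuccAbove (fun _ : Fin (n+1) => AddCircle (1:ℝ)) 0
  let Φ : AddCircle (1:ℝ) × (Fin n → AddCircle (1:ℝ)) →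
      AddCircle (1:ℝ) × (Fin n → AddCircle (1:ℝ)) :=
    fun p => (p.1, fun i => p.2 i - c (Fin.succ i) p.1)
  have hΦ : MeasurePreserving Φ volume volume := by
    have hgm : Measurable (Function.uncurry
        fun (t : AddCircle (1:ℝ)) (y : Fin n → AddCircle (1:ℝ)) =>
          fun i => y i - c (Fin.succ i) t) := by
      refine measurable_pi_lambda _ fun i => ?_
      exact ((measurable_pi_apply i).comp measurable_snd).sub
        (Measurable.comp (hcm (Fin.succ i)) measurable_fst)
    have hg : ∀ᵐ t : AddCircle (1:ℝ) ∂(volume : Measure (AddCircle (1:ℝ))),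
        Measure.map (fun y : Fin n → AddCircle (1:ℝ) =>
          fun i => y i - c (Fin.succ i) t) volume = volume := by
      refine Filter.Eventually.of_forall fun t => ?_
      have : (fun y : Fin n → AddCircle (1:ℝ) => fun i => y i - c (Fin.succ i) t)
          = (fun y => y - fun i => c (Fin.succ i) t) := rfl
      rw [this]
      exact (measurePreserving_sub_right volume _).map_eq
    exact (MeasurePreserving.id volume).skew_product hgm hg
  have key : (fun (x : Fin (n+1) → AddCircle (1:ℝ)) i => x i - c i (x 0)) = e.symm ∘ Φ ∘ e := by
    funext x
    apply e.injective
    rw [Function.comp_apply, Function.comp_apply, e.apply_symm_apply]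
    refine Prod.ext ?_ ?_
    · simp [e, Φ, MeasurableEquiv.piFinSuccAbove, hc0]
    · funext i
      simp [e, Φ, MeasurableEquiv.piFinSuccAbove, Fin.zero_succAbove, Fin.tail]
  rw [key]
  exact ((he.symm e).comp hΦ).comp he

/-- If `f` is a coboundary over rotation by `α` whose transfer function `F = G₁`
extends to a chain of coboundaries `G_i = G_{i+1} ∘ T_α - G_{i+1}` for
`1 ≤ i ≤ k - j - 1`, then the skew product `T` on `𝕋^k` obtained from
`S(x₁,…,x_k) = (x₁+α, x₂+x₁, …, x_k+x_{k−1})` by adding `f(x₁)` in the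
`(j+1)`-st coordinate is measurably isomorphic to `S` via
`π(x₁,…,x_k) = (x₁,…,x_j, x_{j+1} − G₁(x₁), …, x_k − G_{k−j}(x₁))`. -/
theorem skew_product_isomorphic_of_coboundary_chain
    (α : ℝ) (hα : Irrational α) (k j : ℕ) (hk : 0 < k) (hj : 0 < j) (hjk : j ≤ k)
    (f F : AddCircle (1 : ℝ) → AddCircle (1 : ℝ)) (hF : Measurable F)
    (hf : ∀ t, f t = F (t + (α : AddCircle (1 : ℝ))) - F t)
    (G : ℕ → AddCircle (1 : ℝ) → AddCircle (1 : ℝ))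
    (hG1 : G 1 = F) (hGmeas : ∀ i, Measurable (G i))
    (hchain : ∀ i, 1 ≤ i → i + 1 ≤ k - j →
      ∀ t, G i t = G (i + 1) (t + (α : AddCircle (1 : ℝ))) - G (i + 1) t) :
    let 𝕋 := AddCircle (1 : ℝ)
    let T : (Fin k → 𝕋) → (Fin k → 𝕋) := fun x i =>
      x i + (if (i : ℕ) = 0 then (α : 𝕋) else x ⟨(i : ℕ) - 1, Nat.lt_of_le_of_lt (Nat.sub_le _ _) i.2⟩)
        + (if (i : ℕ) = j then f (x ⟨0, hk⟩) else 0)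
    let S : (Fin k → 𝕋) → (Fin k → 𝕋) := fun x i =>
      x i + (if (i : ℕ) = 0 then (α : 𝕋) else x ⟨(i : ℕ) - 1, Nat.lt_of_le_of_lt (Nat.sub_le _ _) i.2⟩)
    let π : (Fin k → 𝕋) → (Fin k → 𝕋) := fun x i =>
      x i - (if j ≤ (i : ℕ) then G ((i : ℕ) - j + 1) (x ⟨0, hk⟩) else 0)
    Function.Bijective π ∧
    MeasurePreserving π volume volume ∧
    ∀ x, π (T x) = S (π x) := by
  intro 𝕋 T S π
  obtain ⟨n, rfl⟩ : ∃ n, k = n + 1 := ⟨k - 1, by omega⟩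
  set c : Fin (n+1) → 𝕋 → 𝕋 :=
    fun i t => if j ≤ (i:ℕ) then G ((i:ℕ) - j + 1) t else 0 with hc
  have hπ : ∀ x, π x = fun i => x i - c i (x 0) := fun x => rfl
  have hc0 : ∀ t, c 0 t = 0 := fun t => by
    simp only [hc, Fin.val_zero]
    exact if_neg (by omega)
  have hcm : ∀ i, Measurable (c i) := by
    intro i
    by_cases h : j ≤ (i:ℕ) <;> simp [hc, h, hGmeas] <;> exact hGmeas _
  refine ⟨Function.bijective_iff_has_inverse.mpr
      ⟨fun x i => x i + c i (x 0), ?_, ?_⟩, ?_, ?_⟩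
  · intro x
    funext i
    simp only [hπ, hc0, sub_zero, sub_add_cancel]
  · intro x
    funext i
    simp only [hπ, hc0, add_zero, add_sub_cancel_right]
  · rw [show π = _ from funext hπ]
    exact aux_mp c hcm hc0
  · intro x
    funext i
    have hT : ∀ (y : Fin (n+1) → 𝕋) (m : Fin (n+1)), T y m =
        y m + (if (m : ℕ) = 0 then (α : 𝕋)
          else y ⟨(m : ℕ) - 1, Nat.lt_of_le_of_lt (Nat.sub_le _ _) m.2⟩)
        + (if (m : ℕ) = j then f (y 0) else 0) := fun _ _ => rfl
    have hS : ∀ (y : Fin (n+1) → 𝕋) (m : Fin (n+1)), S y m =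
        y m + (if (m : ℕ) = 0 then (α : 𝕋)
          else y ⟨(m : ℕ) - 1, Nat.lt_of_le_of_lt (Nat.sub_le _ _) m.2⟩) := fun _ _ => rfl
    have hT0 : T x 0 = x 0 + (α : 𝕋) := by
      rw [hT, if_pos (by simp), if_neg (by simp; omega), add_zero]
    have hπa : ∀ (y : Fin (n+1) → 𝕋) (m : Fin (n+1)), π y m = y m - c m (y 0) :=
      fun y m => by rw [hπ]
    rw [hπa, hS, hπa, hT, hT0]
    by_cases h0 : (i : ℕ) = 0
    · have hnj : ¬ j ≤ (i:ℕ) := by omega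
      rw [if_pos h0, if_pos h0, if_neg (show ¬ (i:ℕ) = j by omega)]
      simp only [hc]
      rw [if_neg hnj, if_neg hnj]
      abel
    · rw [if_neg h0, if_neg h0, hπa]
      rcases Nat.lt_trichotomy (i:ℕ) j with hlt | heq | hgt
      · rw [if_neg (show ¬(i:ℕ) = j by omega)]
        simp only [hc, Fin.val_mk]
        rw [if_neg (show ¬ j ≤ (i:ℕ) by omega), if_neg (show ¬ j ≤ (i:ℕ) by omega),
          if_neg (show ¬ j ≤ (i:ℕ) - 1 by omega)]
        abel
      · rw [if_pos heq]
        simp only [hc, Fin.val_mk]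
        rw [if_pos (show j ≤ (i:ℕ) by omega), if_pos (show j ≤ (i:ℕ) by omega),
          if_neg (show ¬ j ≤ (i:ℕ) - 1 by omega),
          show (i:ℕ) - j + 1 = 1 by omega, hG1, hf (x 0)]
        abel
      · rw [if_neg (show ¬(i:ℕ) = j by omega)]
        simp only [hc, Fin.val_mk]
        rw [if_pos (show j ≤ (i:ℕ) by omega), if_pos (show j ≤ (i:ℕ) by omega),
          if_pos (show j ≤ (i:ℕ) - 1 by omega),
          show (i:ℕ) - 1 - j + 1 = (i:ℕ) - j by omega,
          hchain ((i:ℕ) - j) (by omega) (by omega) (x 0)]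
        abel
end

section
/- Let α be irrational and k ≥ 1. The affine skew product S(x_1,…,x_k) = (x_1+α, x_2+x_1, x_3+x_2, …, x_k+x_{k−1}) on 𝕋^k preserves Haar measure and is ergodic. -/
open MeasureTheory Set Function AddCircle
open scoped ComplexConjugate

noncomputable section

namespace AffineSkewAux

abbrev T1 := AddCircle (1 : ℝ)

variable {m : ℕ}

/-- The affine skew product map on `𝕋^(m+1)`. -/
def Smap (m : ℕ) (α : ℝ) : (Fin (m+1) → T1) → (Fin (m+1) → T1) := fun x i =>
  x i + (if (i : ℕ) = 0 then (α : T1)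
    else x ⟨(i : ℕ) - 1, Nat.lt_of_le_of_lt (Nat.sub_le _ _) i.2⟩)

/-- The linear part of `Smap`. -/
def Amap (m : ℕ) : (Fin (m+1) → T1) →+ (Fin (m+1) → T1) where
  toFun x i := x i + (if (i : ℕ) = 0 then 0
    else x ⟨(i : ℕ) - 1, Nat.lt_of_le_of_lt (Nat.sub_le _ _) i.2⟩)
  map_zero' := by funext i; simp
  map_add' x y := by
    funext i
    dsimp only [Pi.add_apply]
    split_ifs <;> abel

def cvec (m : ℕ) (α : ℝ) : Fin (m+1) → T1 := fun i => if (i : ℕ) = 0 then (α : T1) else 0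

lemma Smap_eq_comp (α : ℝ) : Smap m α = (fun y => y + cvec m α) ∘ (Amap m) := by
  funext x i
  simp only [Smap, comp_apply, Pi.add_apply, Amap, AddMonoidHom.coe_mk, ZeroHom.coe_mk, cvec]
  split_ifs <;> abel

lemma continuous_Amap : Continuous (Amap m) := by
  refine continuous_pi fun i => ?_
  refine ((continuous_apply i).add ?_)
  split_ifs
  · exact continuous_const
  · exact continuous_apply _

lemma continuous_Smap (α : ℝ) : Continuous (Smap m α) := by
  rw [Smap_eq_comp]
  exact (continuous_id.add continuous_const).comp continuous_Amap

lemma Amap_injective : Function.Injective (Amap m) := by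
  intro x y hxy
  funext i
  obtain ⟨iv, hiv⟩ := i
  induction iv using Nat.strong_induction_on with
  | _ iv ih =>
    have h := congrFun hxy ⟨iv, hiv⟩
    simp only [Amap, AddMonoidHom.coe_mk, ZeroHom.coe_mk] at h
    rcases Nat.eq_zero_or_pos iv with h0 | h0
    · simpa [h0] using h
    · have hne : iv ≠ 0 := h0.ne'
      have hprev := ih (iv - 1) (Nat.sub_lt h0 one_pos) (Nat.lt_of_le_of_lt (Nat.sub_le _ _) hiv)
      simp only [hne, if_neg] at h
      rw [hprev] at h
      exact add_right_cancel h

lemma Amap_surjective : Function.Surjective (Amap m) := by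
  intro y
  let y' : ℕ → T1 := fun j => if h : j < m + 1 then y ⟨j, h⟩ else 0
  let g : ℕ → T1 := fun j => Nat.rec (y' 0) (fun n gn => y' (n+1) - gn) j
  refine ⟨fun i => g i, ?_⟩
  funext i
  simp only [Amap, AddMonoidHom.coe_mk, ZeroHom.coe_mk]
  obtain ⟨iv, hiv⟩ := i
  rcases Nat.eq_zero_or_pos iv with h0 | h0
  · subst h0
    rw [if_pos rfl, add_zero]
    show g 0 = _
    simp only [g, y', dif_pos hiv]
    rfl
  · have hne : iv ≠ 0 := h0.ne'
    rw [if_neg hne]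
    obtain ⟨j, rfl⟩ : ∃ j, iv = j + 1 := ⟨iv - 1, (Nat.succ_pred_eq_of_pos h0).symm⟩
    show g (j+1) + g j = _
    have : g (j+1) = y' (j+1) - g j := rfl
    rw [this, sub_add_cancel]
    simp only [y', dif_pos hiv]

lemma Smap_bijective (α : ℝ) : Function.Bijective (Smap m α) := by
  rw [Smap_eq_comp]
  exact (Equiv.addRight (cvec m α)).bijective.comp ⟨Amap_injective, Amap_surjective⟩

/-! ### Measure-theoretic setup -/

instance : IsProbabilityMeasure (volume : Measure T1) :=
  ⟨by simp [AddCircle.measure_univ]⟩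

instance : Measure.IsAddHaarMeasure (volume : Measure (Fin (m+1) → T1)) := by
  refine Measure.isAddHaarMeasure_of_isCompact_nonempty_interior volume univ isCompact_univ ?_ ?_ ?_
  · simp [interior_univ]
  · simp
  · simp

lemma measurePreserving_Smap (α : ℝ) :
    MeasurePreserving (Smap m α) volume volume := by
  rw [Smap_eq_comp]
  have h1 : MeasurePreserving (Amap m) (volume : Measure (Fin (m+1) → T1)) volume :=
    AddMonoidHom.measurePreserving continuous_Amap Amap_surjective rfl
  have h2 : MeasurePreserving (fun y : Fin (m+1) → T1 => y + cvec m α) volume volume := by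
    simpa [add_comm] using
      measurePreserving_add_left (volume : Measure (Fin (m+1) → T1)) (cvec m α)
  exact h2.comp h1

/-- `Smap` as a homeomorphism. -/
def Shomeo (m : ℕ) (α : ℝ) : (Fin (m+1) → T1) ≃ₜ (Fin (m+1) → T1) :=
  Continuous.homeoOfEquivCompactToT2
    (f := Equiv.ofBijective _ (Smap_bijective (m := m) α)) (continuous_Smap α)

/-- `Smap` as a measurable equivalence. -/
def Smeq (m : ℕ) (α : ℝ) : (Fin (m+1) → T1) ≃ᵐ (Fin (m+1) → T1) :=
  (Shomeo m α).toMeasurableEquiv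

lemma Smeq_coe (α : ℝ) : ⇑(Smeq m α) = Smap m α := rfl

/-! ### Characters of the torus -/

lemma integral_fourier (n : ℤ) :
    ∫ x : T1, fourier n x ∂volume = if n = 0 then 1 else 0 := by
  split_ifs with h
  · subst h
    simp only [fourier_zero]
    simp
  · exact integral_eq_zero_of_add_right_eq_neg (μ := (volume : Measure T1))
      (fourier_add_half_inv_index h one_pos)

/-- The character on the torus attached to a frequency vector `n`. -/
def chi (m : ℕ) (n : Fin (m+1) → ℤ) : C((Fin (m+1) → T1), ℂ) :=
  ∏ i, (fourier (n i)).comp ⟨fun x => x i, continuous_apply i⟩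

lemma chi_apply (n : Fin (m+1) → ℤ) (x : Fin (m+1) → T1) :
    chi m n x = ∏ i, fourier (n i) (x i) := by
  simp [chi, ContinuousMap.prod_apply]

lemma chi_add (a b : Fin (m+1) → ℤ) : chi m (a + b) = chi m a * chi m b := by
  ext x
  simp only [chi_apply, ContinuousMap.mul_apply, Pi.add_apply, fourier_add,
    Finset.prod_mul_distrib]

lemma chi_zero : chi m 0 = 1 := by
  ext x
  simp [chi_apply, fourier_zero]

lemma star_chi (n : Fin (m+1) → ℤ) : star (chi m n) = chi m (-n) := by
  ext x
  simp only [ContinuousMap.star_apply, chi_apply, Pi.neg_apply, fourier_neg]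
  rw [← map_prod (starRingEnd ℂ)]
  rfl

lemma conj_chi (n : Fin (m+1) → ℤ) (x) : conj (chi m n x) = chi m (-n) x := by
  rw [← star_chi]; rfl

lemma norm_fourier_pt {T : ℝ} (k : ℤ) (t : AddCircle T) : ‖(fourier k t : ℂ)‖ = 1 := by
  rw [fourier_apply, Circle.norm_coe]

lemma integral_chi (n : Fin (m+1) → ℤ) :
    ∫ x : Fin (m+1) → T1, chi m n x = if n = 0 then 1 else 0 := by
  simp only [chi_apply]
  rw [MeasureTheory.volume_pi, MeasureTheory.integral_fintype_prod_eq_prod (f := fun i (t : T1) => (fourier (n i) t : ℂ))]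
  simp only [integral_fourier]
  split_ifs with h
  · rw [Finset.prod_eq_one]
    intro i _
    rw [if_pos (by simp [h])]
  · obtain ⟨i, hi⟩ : ∃ i, n i ≠ 0 := by
      by_contra hc
      push_neg at hc
      exact h (funext hc)
    exact Finset.prod_eq_zero (Finset.mem_univ i) (by rw [if_neg hi])

/-! ### Characters in `L²` -/

/-- The characters as elements of `L²`. -/
def chiLp (m : ℕ) (n : Fin (m+1) → ℤ) : Lp ℂ 2 (volume : Measure (Fin (m+1) → T1)) :=
  ContinuousMap.toLp (E := ℂ) 2 volume ℂ (chi m n)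

lemma coeFn_chiLp (n : Fin (m+1) → ℤ) : chiLp m n =ᵐ[volume] chi m n :=
  ContinuousMap.coeFn_toLp volume (chi m n)

lemma orthonormal_chiLp : Orthonormal ℂ (chiLp m) := by
  rw [orthonormal_iff_ite]
  intro a b
  rw [chiLp, chiLp, ContinuousMap.inner_toLp]
  have h : ∀ x : Fin (m+1) → T1, chi m b x * conj (chi m a x) = chi m (-a + b) x := by
    intro x
    rw [mul_comm, conj_chi, chi_add, ContinuousMap.mul_apply]
  simp_rw [h]
  rw [integral_chi]
  by_cases hab : a = b
  · rw [if_pos (by simp [hab]), if_pos hab]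
  · rw [if_neg (fun hc => hab (neg_add_eq_zero.mp hc)), if_neg hab]

/-- The star subalgebra generated by the characters. -/
def chiSA (m : ℕ) : StarSubalgebra ℂ C((Fin (m+1) → T1), ℂ) where
  toSubalgebra := Algebra.adjoin ℂ (Set.range (chi m))
  star_mem' := by
    show Algebra.adjoin ℂ (Set.range (chi m)) ≤ star (Algebra.adjoin ℂ (Set.range (chi m)))
    refine Algebra.adjoin_le ?_
    rintro - ⟨n, rfl⟩
    exact Algebra.subset_adjoin ⟨-n, (star_chi n).symm⟩

lemma chiSA_coe :
    Subalgebra.toSubmodule (chiSA m).toSubalgebra = Submodule.span ℂ (Set.range (chi m)) := by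
  apply Algebra.adjoin_eq_span_of_subset
  refine Subset.trans ?_ Submodule.subset_span
  intro x hx
  refine Submonoid.closure_induction (fun _ => id) ⟨0, chi_zero⟩ ?_ hx
  rintro - - - - ⟨a, rfl⟩ ⟨b, rfl⟩
  exact ⟨a + b, chi_add a b⟩

lemma chi_single_apply (i : Fin (m+1)) (x : Fin (m+1) → T1) :
    chi m (Pi.single i 1) x = toCircle (x i) := by
  rw [chi_apply, Finset.prod_eq_single i (fun j _ hj => by
    rw [Pi.single_eq_of_ne hj, fourier_zero]) (fun h => absurd (Finset.mem_univ i) h)]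
  rw [Pi.single_eq_same, fourier_one]

lemma chiSA_separatesPoints : (chiSA m).SeparatesPoints := by
  intro x y hxy
  obtain ⟨i, hi⟩ : ∃ i, x i ≠ y i := by
    by_contra hc
    push_neg at hc
    exact hxy (funext hc)
  refine ⟨_, ⟨chi m (Pi.single i 1), Algebra.subset_adjoin ⟨Pi.single i 1, rfl⟩, rfl⟩, ?_⟩
  dsimp only
  rw [chi_single_apply, chi_single_apply]
  intro hc
  rw [Circle.coe_inj] at hc
  exact hi (injective_toCircle one_ne_zero hc)

lemma chiSA_closure_eq_top : (chiSA m).topologicalClosure = ⊤ :=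
  ContinuousMap.starSubalgebra_topologicalClosure_eq_top_of_separatesPoints (chiSA m)
    chiSA_separatesPoints

lemma span_chi_closure_eq_top :
    (Submodule.span ℂ (Set.range (chi m))).topologicalClosure = ⊤ := by
  rw [← chiSA_coe]
  exact congr_arg (Subalgebra.toSubmodule <| StarSubalgebra.toSubalgebra ·) chiSA_closure_eq_top

lemma span_chiLp_closure_eq_top :
    (Submodule.span ℂ (Set.range (chiLp m))).topologicalClosure = ⊤ := by
  convert (ContinuousMap.toLp_denseRange ℂ (volume : Measure (Fin (m+1) → T1)) ℂ
      (by norm_num : (2 : ENNReal) ≠ ⊤)).topologicalClosure_map_submodule span_chi_closure_eq_top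
  · rfl
  erw [Submodule.map_span, Set.range_comp]
  simp only [ContinuousLinearMap.coe_coe]

/-! ### Action of `Smap` on characters -/

def Bmap (m : ℕ) (n : Fin (m+1) → ℤ) : Fin (m+1) → ℤ := fun i =>
  n i + (if h : (i : ℕ) + 1 < m + 1 then n ⟨(i : ℕ) + 1, h⟩ else 0)

lemma fourier_pt_add {T : ℝ} (k : ℤ) (a b : AddCircle T) :
    (fourier k (a + b) : ℂ) = fourier k a * fourier k b := by
  rw [fourier_apply, fourier_apply, fourier_apply, zsmul_add, toCircle_add]
  rfl

lemma chi_comp_Smap (α : ℝ) (n : Fin (m+1) → ℤ) (x : Fin (m+1) → T1) :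
    chi m n (Smap m α x) = fourier (n 0) ((α : T1)) * chi m (Bmap m n) x := by
  have key : ∀ j : Fin m,
      x ⟨((j.succ : Fin (m+1)) : ℕ) - 1, Nat.lt_of_le_of_lt (Nat.sub_le _ _) (j.succ).2⟩
        = x j.castSucc := by
    intro j
    rfl
  rw [chi_apply]
  simp only [Smap, fourier_pt_add]
  rw [Finset.prod_mul_distrib, ← chi_apply]
  have h1 : (∏ i : Fin (m+1), (fourier (n i)
        (if (i : ℕ) = 0 then (α : T1)
          else x ⟨(i : ℕ) - 1, Nat.lt_of_le_of_lt (Nat.sub_le _ _) i.2⟩) : ℂ))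
      = fourier (n 0) ((α : T1)) * ∏ j : Fin m, (fourier (n j.succ) (x j.castSucc) : ℂ) := by
    rw [Fin.prod_univ_succ]
    congr 1
  have h2 : chi m (Bmap m n) x
      = chi m n x * ∏ j : Fin m, (fourier (n j.succ) (x j.castSucc) : ℂ) := by
    rw [chi_apply]
    simp only [Bmap, fourier_add]
    rw [Finset.prod_mul_distrib, ← chi_apply]
    congr 1
    rw [Fin.prod_univ_castSucc]
    have hlast : (if h : ((Fin.last m : Fin (m+1)) : ℕ) + 1 < m + 1
        then n ⟨((Fin.last m : Fin (m+1)) : ℕ) + 1, h⟩ else 0) = 0 := dif_neg (by simp)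
    rw [hlast, fourier_zero, mul_one]
    refine Finset.prod_congr rfl fun j _ => ?_
    have hc : ((j.castSucc : Fin (m+1)) : ℕ) + 1 < m + 1 := by
      simp [Nat.succ_lt_succ j.2]
    rw [dif_pos hc]
    rfl
  rw [h1, h2]
  ring

/-! ### Combinatorics of the `Bmap` orbit -/

lemma Bmap_fix {n : Fin (m+1) → ℤ} (h : ∀ l : Fin (m+1), (l : ℕ) ≠ 0 → n l = 0) :
    Bmap m n = n := by
  funext i
  simp only [Bmap]
  rcases Nat.lt_or_ge ((i : ℕ) + 1) (m + 1) with hlt | hge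
  · rw [dif_pos hlt, h ⟨(i:ℕ)+1, hlt⟩ (Nat.succ_ne_zero _), add_zero]
  · rw [dif_neg (by omega), add_zero]

lemma Bmap_iterate {n : Fin (m+1) → ℤ} {i₀ : Fin (m+1)} (h0 : (i₀ : ℕ) ≠ 0)
    (hmax : ∀ l, i₀ < l → n l = 0) (j : ℕ) :
    (∀ l, i₀ < l → (Bmap m)^[j] n l = 0) ∧ (Bmap m)^[j] n i₀ = n i₀ ∧
      (Bmap m)^[j] n ⟨(i₀ : ℕ) - 1, Nat.lt_of_le_of_lt (Nat.sub_le _ _) i₀.2⟩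
        = n ⟨(i₀ : ℕ) - 1, Nat.lt_of_le_of_lt (Nat.sub_le _ _) i₀.2⟩ + (j : ℤ) * n i₀ := by
  induction j with
  | zero => exact ⟨fun l hl => hmax l hl, rfl, by simp⟩
  | succ j ih =>
    obtain ⟨hq1, hq2, hq3⟩ := ih
    set q := (Bmap m)^[j] n with hq
    rw [Function.iterate_succ_apply']
    refine ⟨?_, ?_, ?_⟩
    · intro l hl
      simp only [Bmap, ← hq]
      rw [hq1 l hl]
      rcases Nat.lt_or_ge ((l : ℕ) + 1) (m + 1) with hlt | hge
      · rw [dif_pos hlt, hq1 ⟨(l:ℕ)+1, hlt⟩ (by simp only [Fin.lt_def] at hl ⊢; omega)]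
        ring
      · rw [dif_neg (by omega)]; ring
    · simp only [Bmap, ← hq]
      rw [hq2]
      rcases Nat.lt_or_ge ((i₀ : ℕ) + 1) (m + 1) with hlt | hge
      · rw [dif_pos hlt, hq1 ⟨(i₀:ℕ)+1, hlt⟩ (by simp only [Fin.lt_def]; omega), add_zero]
      · rw [dif_neg (by omega), add_zero]
    · simp only [Bmap, ← hq]
      have hpredlt : ((⟨(i₀ : ℕ) - 1, Nat.lt_of_le_of_lt (Nat.sub_le _ _) i₀.2⟩ :
          Fin (m+1)) : ℕ) + 1 < m + 1 := by
        simp only []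
        omega
      rw [dif_pos hpredlt]
      have heq : (⟨((⟨(i₀ : ℕ) - 1, Nat.lt_of_le_of_lt (Nat.sub_le _ _) i₀.2⟩ :
          Fin (m+1)) : ℕ) + 1, hpredlt⟩ : Fin (m+1)) = i₀ := by
        ext
        simp only []
        omega
      rw [heq, hq2, hq3]
      push_cast
      ring

lemma Bmap_orbit_injective {n : Fin (m+1) → ℤ} {i₀ : Fin (m+1)} (h0 : (i₀ : ℕ) ≠ 0)
    (hmax : ∀ l, i₀ < l → n l = 0) (hn : n i₀ ≠ 0) :
    Function.Injective (fun j : ℕ => (Bmap m)^[j] n) := by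
  intro a b hab
  have ha := (Bmap_iterate h0 hmax a).2.2
  have hb := (Bmap_iterate h0 hmax b).2.2
  have := congrFun hab ⟨(i₀ : ℕ) - 1, Nat.lt_of_le_of_lt (Nat.sub_le _ _) i₀.2⟩
  simp only at this
  rw [ha, hb, add_right_inj] at this
  exact_mod_cast mul_right_cancel₀ hn this

/-! ### The main ergodicity argument -/

lemma fourier_alpha_ne_one {α : ℝ} (hα : Irrational α) {k : ℤ} (hk : k ≠ 0) :
    (fourier k ((α : T1)) : ℂ) ≠ 1 := by
  intro hc
  rw [fourier_coe_apply] at hc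
  rw [Complex.exp_eq_one_iff] at hc
  obtain ⟨t, ht⟩ := hc
  have ht' : 2 * (Real.pi : ℂ) * Complex.I * k * α = t * (2 * Real.pi * Complex.I) := by
    simpa using ht
  have h2 : (2 * (Real.pi : ℂ) * Complex.I) * ((k : ℂ) * α)
      = (2 * (Real.pi : ℂ) * Complex.I) * t := by linear_combination ht'
  have h3 : (k : ℂ) * α = t := mul_left_cancel₀ Complex.two_pi_I_ne_zero h2
  have h4 : (k : ℝ) * α = t := by exact_mod_cast h3
  exact (hα.intCast_mul hk).ne_int t h4

lemma ergodic_Smap (α : ℝ) (hα : Irrational α) : Ergodic (Smap m α) volume := by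
  refine ⟨measurePreserving_Smap α, ⟨fun s hs hinv => ?_⟩⟩
  -- the indicator function of the invariant set
  set f : (Fin (m+1) → T1) → ℂ := s.indicator (fun _ => 1) with hf_def
  have hf2 : MemLp f 2 volume := (memLp_const (1 : ℂ)).indicator hs
  set F : Lp ℂ 2 (volume : Measure (Fin (m+1) → T1)) := hf2.toLp f with hF_def
  -- Fourier coefficients
  set c : (Fin (m+1) → ℤ) → ℂ := fun n => ∫ x, conj (chi m n x) * f x ∂volume with hc_def
  have hinner : ∀ n, @inner ℂ _ _ (chiLp m n) F = c n := by
    intro n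
    rw [hF_def, chiLp]
    rw [MeasureTheory.L2.inner_def]
    refine integral_congr_ae ?_
    filter_upwards [ContinuousMap.coeFn_toLp (p := 2) (𝕜 := ℂ) volume (chi m n),
      hf2.coeFn_toLp] with x h1 h2
    rw [h1, h2, RCLike.inner_apply, mul_comm]
  -- invariance under `Smap` gives the functional equation
  have hfS : ∀ x, f (Smap m α x) = f x := by
    intro x
    by_cases hx : x ∈ s
    · have : Smap m α x ∈ s := by rw [← hinv] at hx; exact hx
      simp [hf_def, indicator_of_mem, hx, this]
    · have : Smap m α x ∉ s := by rw [← hinv] at hx; exact hx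
      simp [hf_def, indicator_of_notMem, hx, this]
  have hrel : ∀ n, c n = conj ((fourier (n 0) ((α : T1))) : ℂ) * c (Bmap m n) := by
    intro n
    have hMP : MeasurePreserving (⇑(Smeq m α)) volume volume := measurePreserving_Smap α
    have hcv : c n = ∫ x, conj (chi m n (Smap m α x)) * f (Smap m α x) ∂volume := by
      rw [hc_def]
      exact (hMP.integral_comp' (fun x => conj (chi m n x) * f x)).symm
    rw [hcv]
    simp_rw [hfS, chi_comp_Smap α n, map_mul, mul_assoc]
    rw [MeasureTheory.integral_const_mul]
  have hnorm : ∀ n, ‖c n‖ = ‖c (Bmap m n)‖ := by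
    intro n
    rw [hrel n, norm_mul, RCLike.norm_conj, norm_fourier_pt, one_mul]
  -- all nonzero Fourier coefficients vanish
  have hzero : ∀ n, n ≠ 0 → c n = 0 := by
    intro n hn
    by_cases hcase : ∃ i : Fin (m+1), (i : ℕ) ≠ 0 ∧ n i ≠ 0
    · -- the orbit of `n` under `Bmap` is infinite
      classical
      set t : Finset (Fin (m+1)) :=
        Finset.univ.filter (fun i => (i : ℕ) ≠ 0 ∧ n i ≠ 0) with ht_def
      have htne : t.Nonempty := by
        obtain ⟨i, hi1, hi2⟩ := hcase
        exact ⟨i, by rw [ht_def]; exact Finset.mem_filter.mpr ⟨Finset.mem_univ _, hi1, hi2⟩⟩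
      set i₀ := t.max' htne with hi₀
      have hi₀mem : i₀ ∈ t := t.max'_mem htne
      have h0 : (i₀ : ℕ) ≠ 0 := by
        have := Finset.mem_filter.mp hi₀mem
        exact this.2.1
      have hni₀ : n i₀ ≠ 0 := by
        have := Finset.mem_filter.mp hi₀mem
        exact this.2.2
      have hmax : ∀ l, i₀ < l → n l = 0 := by
        intro l hl
        by_contra hc
        have hl0 : (l : ℕ) ≠ 0 := by
          have : (i₀ : ℕ) < (l : ℕ) := hl
          omega
        have : l ∈ t := by rw [ht_def]; exact Finset.mem_filter.mpr ⟨Finset.mem_univ _, hl0, hc⟩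
        exact absurd (t.le_max' l this) (not_le.mpr hl)
      -- constant norm along the orbit
      have hconst : ∀ j : ℕ, ‖c ((Bmap m)^[j] n)‖ = ‖c n‖ := by
        intro j
        induction j with
        | zero => rfl
        | succ j ih => rw [Function.iterate_succ_apply', ← hnorm, ih]
      -- Bessel's inequality gives summability
      have hsummable : Summable (fun nn : Fin (m+1) → ℤ => ‖@inner ℂ _ _ (chiLp m nn) F‖ ^ 2) :=
        (orthonormal_chiLp (m := m)).inner_products_summable F
      have hsum2 : Summable ((fun nn : Fin (m+1) → ℤ => ‖@inner ℂ _ _ (chiLp m nn) F‖ ^ 2) ∘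
          fun j : ℕ => (Bmap m)^[j] n) :=
        hsummable.comp_injective (Bmap_orbit_injective h0 hmax hni₀)
      have htend := hsum2.tendsto_atTop_zero
      have heval : ((fun nn : Fin (m+1) → ℤ => ‖@inner ℂ _ _ (chiLp m nn) F‖ ^ 2) ∘
          fun j : ℕ => (Bmap m)^[j] n) = fun _ : ℕ => ‖c n‖ ^ 2 := by
        funext j
        simp only [comp_apply, hinner, hconst j]
      rw [heval] at htend
      have : ‖c n‖ ^ 2 = 0 := tendsto_nhds_unique tendsto_const_nhds htend
      have : ‖c n‖ = 0 := by
        have := sq_eq_zero_iff.mp this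
        exact this
      exact norm_eq_zero.mp this
    · -- `n` is supported on the first coordinate: rotation case
      push_neg at hcase
      have hsupp : ∀ l : Fin (m+1), (l : ℕ) ≠ 0 → n l = 0 := hcase
      have hBn : Bmap m n = n := Bmap_fix hsupp
      have hn0 : n 0 ≠ 0 := by
        intro hc
        apply hn
        funext i
        by_cases hi : (i : ℕ) = 0
        · have : i = 0 := Fin.ext hi
          rw [this, hc]; rfl
        · rw [hsupp i hi]; rfl
      have hζ : conj ((fourier (n 0) ((α : T1))) : ℂ) ≠ 1 := by
        intro hc
        apply fourier_alpha_ne_one hα hn0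
        calc ((fourier (n 0) ((α : T1))) : ℂ)
            = conj (conj ((fourier (n 0) ((α : T1))) : ℂ)) := (Complex.conj_conj _).symm
          _ = conj 1 := by rw [hc]
          _ = 1 := map_one _
      have h := hrel n
      rw [hBn] at h
      have : c n * (1 - conj ((fourier (n 0) ((α : T1))) : ℂ)) = 0 := by
        rw [mul_sub, mul_one]
        rw [mul_comm] at h
        rw [← h, sub_self]
      rcases mul_eq_zero.mp this with h' | h'
      · exact h'
      · exact absurd (sub_eq_zero.mp h').symm hζ
  -- `F` is orthogonal to all characters except the constant
  set c0 : ℂ := @inner ℂ _ _ (chiLp m 0) F with hc0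
  set g : Lp ℂ 2 (volume : Measure (Fin (m+1) → T1)) := F - c0 • chiLp m 0 with hg
  have hgchi : ∀ n, @inner ℂ _ _ (chiLp m n) g = 0 := by
    intro n
    rw [hg, inner_sub_right, inner_smul_right]
    have hon := orthonormal_iff_ite.mp (orthonormal_chiLp (m := m)) n 0
    by_cases hn : n = 0
    · subst hn
      rw [hon, if_pos rfl, mul_one, hc0, sub_self]
    · rw [hon, if_neg hn, mul_zero, hinner, hzero n hn, sub_zero]
  have hgspan : ∀ y ∈ Submodule.span ℂ (Set.range (chiLp m)), @inner ℂ _ _ y g = 0 := by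
    intro y hy
    induction hy using Submodule.span_induction with
    | mem y hy => obtain ⟨n, rfl⟩ := hy; exact hgchi n
    | zero => simp
    | add u v hu hv hu' hv' => rw [inner_add_left, hu', hv', add_zero]
    | smul a u hu hu' => rw [inner_smul_left, hu', mul_zero]
  have hgzero : g = 0 := by
    have hdense :=
      Submodule.dense_iff_topologicalClosure_eq_top.mpr (span_chiLp_closure_eq_top (m := m))
    have hclosed : IsClosed {y : Lp ℂ 2 (volume : Measure (Fin (m+1) → T1)) |
        @inner ℂ _ _ y g = 0} :=
      isClosed_eq (continuous_id.inner continuous_const) continuous_const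
    have hall : ∀ y : Lp ℂ 2 (volume : Measure (Fin (m+1) → T1)), @inner ℂ _ _ y g = 0 := by
      intro y
      have : closure ((Submodule.span ℂ (Set.range (chiLp m)) : Submodule ℂ _) : Set _) ⊆
          {y | @inner ℂ _ _ y g = 0} := closure_minimal hgspan hclosed
      exact this (by rw [hdense.closure_eq]; trivial)
    have := hall g
    rwa [inner_self_eq_zero] at this
  -- hence the indicator is a.e. constant
  have hFc : F = c0 • chiLp m 0 := by
    have := sub_eq_zero.mp hgzero
    exact this
  have hae : f =ᵐ[volume] fun _ => c0 := by
    have h1 : F =ᵐ[volume] f := hf2.coeFn_toLp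
    have h2 : (c0 • chiLp m 0 : Lp ℂ 2 (volume : Measure (Fin (m+1) → T1)))
        =ᵐ[volume] fun x => c0 * chi m 0 x := by
      filter_upwards [Lp.coeFn_smul c0 (chiLp m 0), coeFn_chiLp (m := m) 0] with x hx hx'
      rw [hx, Pi.smul_apply, hx', smul_eq_mul]
    rw [hFc] at h1
    filter_upwards [h1, h2] with x hx hx'
    rw [← hx, hx', chi_zero]
    simp
  -- conclude: `s` is null or conull
  rw [Filter.eventuallyConst_set]
  by_cases hc0 : c0 = 1
  · left
    filter_upwards [hae] with x hx
    by_contra hxs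
    rw [hf_def, indicator_of_notMem hxs, hc0] at hx
    exact one_ne_zero hx.symm
  · right
    filter_upwards [hae] with x hx
    intro hxs
    rw [hf_def, indicator_of_mem hxs] at hx
    exact hc0 hx.symm

end AffineSkewAux

open AffineSkewAux in
/-- For irrational `α`, the affine skew product
`S(x₁,…,x_k) = (x₁+α, x₂+x₁, …, x_k+x_{k−1})` on `𝕋^k` preserves Haar measure
and is ergodic. -/
theorem affine_skew_product_ergodic
    (α : ℝ) (hα : Irrational α) (k : ℕ) (hk : 0 < k) :
    let 𝕋 := AddCircle (1 : ℝ)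
    let S : (Fin k → 𝕋) → (Fin k → 𝕋) := fun x i =>
      x i + (if (i : ℕ) = 0 then (α : 𝕋)
        else x ⟨(i : ℕ) - 1, Nat.lt_of_le_of_lt (Nat.sub_le _ _) i.2⟩)
    MeasurePreserving S volume volume ∧ Ergodic S volume := by
  intro 𝕋 S
  obtain ⟨m, rfl⟩ : ∃ m, k = m + 1 := ⟨k - 1, (Nat.succ_pred_eq_of_pos hk).symm⟩
  exact ⟨measurePreserving_Smap α, ergodic_Smap α hα⟩
end
end

section
/- Let (Y, ν, S) be a uniquely ergodic topological dynamical system on a compact metric space, K a compact metrizable abelian group, and ρ : Y → K continuous. If the skew product T(y,k) = (Sy, k + ρ(y)) on Y × K is ergodic with respect to ν × m_K, then (Y × K, T) is uniquely ergodic. -/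
open MeasureTheory Filter Topology Function
open scoped NNReal ENNReal

section AuxFE

/-- Translation lemma for skew products. -/
lemma skew_iterate_translate {Y K : Type*} [AddCommGroup K] (S : Y → Y) (ρ : Y → K) :
    ∀ (n : ℕ) (y : Y) (k g : K),
      (fun p : Y × K => (S p.1, p.2 + ρ p.1))^[n] (y, k + g)
        = (((fun p : Y × K => (S p.1, p.2 + ρ p.1))^[n] (y, k)).1,
           ((fun p : Y × K => (S p.1, p.2 + ρ p.1))^[n] (y, k)).2 + g) := by
  intro n
  induction n with
  | zero => intro y k g; simp
  | succ n ih =>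
    intro y k g
    rw [Function.iterate_succ_apply, Function.iterate_succ_apply]
    simp only
    rw [show k + g + ρ y = (k + ρ y) + g from add_right_comm k g (ρ y), ih]

lemma continuous_birkhoffAverageFE {α : Type*} [TopologicalSpace α] {T : α → α} {f : α → ℝ}
    (hT : Continuous T) (hf : Continuous f) (n : ℕ) :
    Continuous (birkhoffAverage ℝ T f n) := by
  have h : Continuous (birkhoffSum T f n) := by
    unfold birkhoffSum
    exact continuous_finset_sum _ fun i _ => hf.comp (hT.iterate i)
  exact h.const_smul ((n:ℝ)⁻¹)

lemma abs_birkhoffAverage_leFE {α : Type*} (T : α → α) (f : α → ℝ) {C : ℝ} (hC : 0 ≤ C)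
    (hf : ∀ x, |f x| ≤ C) (n : ℕ) (x : α) : |birkhoffAverage ℝ T f n x| ≤ C := by
  rcases Nat.eq_zero_or_pos n with rfl | hn
  · simpa [birkhoffAverage] using hC
  · have hsum : |birkhoffSum T f n x| ≤ n * C := by
      unfold birkhoffSum
      calc |∑ i ∈ Finset.range n, f (T^[i] x)|
          ≤ ∑ i ∈ Finset.range n, |f (T^[i] x)| := Finset.abs_sum_le_sum_abs _ _
        _ ≤ ∑ _i ∈ Finset.range n, C := Finset.sum_le_sum fun i _ => hf _
        _ = n * C := by simp [mul_comm]
    have hpos : (0:ℝ) < n := by exact_mod_cast hn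
    have : |birkhoffAverage ℝ T f n x| = (n:ℝ)⁻¹ * |birkhoffSum T f n x| := by
      unfold birkhoffAverage
      rw [smul_eq_mul, abs_mul, abs_inv, Nat.abs_cast]
    rw [this]
    calc (n:ℝ)⁻¹ * |birkhoffSum T f n x| ≤ (n:ℝ)⁻¹ * (n * C) := by
          apply mul_le_mul_of_nonneg_left hsum (by positivity)
      _ = C := by field_simp

lemma integrable_of_bounded_smFE {α : Type*} [MeasurableSpace α] {μ : Measure α}
    [IsFiniteMeasure μ] {f : α → ℝ} (hfm : AEStronglyMeasurable f μ) {C : ℝ}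
    (hb : ∀ x, |f x| ≤ C) : Integrable f μ :=
  ⟨hfm, HasFiniteIntegral.of_bounded (C := C) (Eventually.of_forall fun x => by
    simpa using hb x)⟩

lemma integral_comp_iterateFE {α : Type*} [MeasurableSpace α] {μ : Measure α} {T : α → α}
    (hTm : Measurable T) (hμ : Measure.map T μ = μ) {f : α → ℝ}
    (hfm : StronglyMeasurable f) (n : ℕ) :
    ∫ x, f (T^[n] x) ∂μ = ∫ x, f x ∂μ := by
  induction n with
  | zero => simp
  | succ n ih =>
    have hsm : AEStronglyMeasurable (fun z => f (T^[n] z)) (Measure.map T μ) := by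
      rw [hμ]
      exact (hfm.comp_measurable (hTm.iterate n)).aestronglyMeasurable
    calc ∫ x, f (T^[n+1] x) ∂μ = ∫ x, (fun z => f (T^[n] z)) (T x) ∂μ := by
          simp only [Function.iterate_succ_apply]
      _ = ∫ z, (fun z => f (T^[n] z)) z ∂(Measure.map T μ) :=
          (integral_map hTm.aemeasurable hsm).symm
      _ = ∫ z, f (T^[n] z) ∂μ := by rw [hμ]
      _ = ∫ x, f x ∂μ := ih

lemma integral_birkhoffAverage_eqFE {α : Type*} [MeasurableSpace α] {μ : Measure α}
    [IsProbabilityMeasure μ] {T : α → α} (hTm : Measurable T) (hμ : Measure.map T μ = μ)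
    {f : α → ℝ} (hfm : StronglyMeasurable f) {C : ℝ} (hb : ∀ x, |f x| ≤ C)
    {n : ℕ} (hn : n ≠ 0) :
    ∫ x, birkhoffAverage ℝ T f n x ∂μ = ∫ x, f x ∂μ := by
  have hint : ∀ j : ℕ, Integrable (fun x => f (T^[j] x)) μ := fun j =>
    integrable_of_bounded_smFE
      ((hfm.comp_measurable (hTm.iterate j)).aestronglyMeasurable) (fun x => hb _)
  have hsum : ∫ x, birkhoffSum T f n x ∂μ = n * ∫ x, f x ∂μ := by
    unfold birkhoffSum
    rw [integral_finset_sum _ (fun j _ => hint j)]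
    have : ∀ j ∈ Finset.range n, ∫ x, f (T^[j] x) ∂μ = ∫ x, f x ∂μ := fun j _ =>
      integral_comp_iterateFE hTm hμ hfm j
    rw [Finset.sum_congr rfl this, Finset.sum_const, Finset.card_range, nsmul_eq_mul]
  have hne : ((n:ℝ)) ≠ 0 := by exact_mod_cast hn
  unfold birkhoffAverage
  rw [integral_smul, hsum, smul_eq_mul]
  field_simp

end AuxFE

section MeanErgodic

open scoped ENNReal

/-- The Koopman operator on `L²` associated to a measure preserving map. -/
noncomputable def koopmanFE {α : Type*} [MeasurableSpace α] {m : Measure α} {T : α → α}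
    (hTm : MeasurePreserving T m m) : Lp ℝ 2 m →L[ℝ] Lp ℝ 2 m :=
  LinearMap.mkContinuous
    { toFun := fun g => Lp.compMeasurePreserving T hTm g,
      map_add' := fun g h => map_add _ g h,
      map_smul' := by
        intro c g
        apply Lp.ext
        have h1 := Lp.coeFn_compMeasurePreserving (c • g) hTm
        have h2 := Lp.coeFn_compMeasurePreserving g hTm
        have h3 : ⇑(c • g) =ᵐ[m] c • ⇑g := Lp.coeFn_smul c g
        have h4 : (⇑(c • g)) ∘ T =ᵐ[m] (c • ⇑g) ∘ T :=
          hTm.quasiMeasurePreserving.ae_eq h3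
        have h5 := Lp.coeFn_smul c (Lp.compMeasurePreserving T hTm g)
        refine ((h1.trans h4).trans ?_).trans h5.symm
        have h6 : (c • ⇑g) ∘ T = c • (⇑g ∘ T) := rfl
        rw [h6]
        filter_upwards [h2] with x hx
        simp only [Pi.smul_apply, Function.comp_apply, hx] }
    1 (fun g => by
      rw [one_mul]
      exact le_of_eq (Lp.norm_compMeasurePreserving g hTm))

lemma koopmanFE_apply {α : Type*} [MeasurableSpace α] {m : Measure α} {T : α → α}
    (hTm : MeasurePreserving T m m) (g : Lp ℝ 2 m) :
    koopmanFE hTm g = Lp.compMeasurePreserving T hTm g := rfl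

lemma koopmanFE_norm_le {α : Type*} [MeasurableSpace α] {m : Measure α} {T : α → α}
    (hTm : MeasurePreserving T m m) : ‖koopmanFE hTm‖ ≤ 1 :=
  LinearMap.mkContinuous_norm_le _ zero_le_one _

set_option synthInstance.maxHeartbeats 1000000 in
set_option maxHeartbeats 2000000 in
lemma mean_ergodic_L1FE {α : Type*} [TopologicalSpace α] [CompactSpace α] [MeasurableSpace α]
    [OpensMeasurableSpace α] {m : Measure α} [IsProbabilityMeasure m] {T : α → α}
    (hTc : Continuous T) (hT : Ergodic T m) {f : α → ℝ} (hf : Continuous f) {C : ℝ}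
    (hC : 0 ≤ C) (hfb : ∀ x, |f x| ≤ C) :
    Filter.Tendsto (fun n => ∫ p, |birkhoffAverage ℝ T f n p - ∫ q, f q ∂m| ∂m)
      atTop (𝓝 0) := by
  have hTm : MeasurePreserving T m m := hT.toMeasurePreserving
  have hmem : MemLp f 2 m :=
    MemLp.of_bound hf.aestronglyMeasurable C (Eventually.of_forall fun x => by
      simpa [Real.norm_eq_abs] using hfb x)
  set F : Lp ℝ 2 m := hmem.toLp f with hF
  set U : Lp ℝ 2 m →L[ℝ] Lp ℝ 2 m := koopmanFE hTm with hU
  have hvn := U.tendsto_birkhoffAverage_orthogonalProjection (koopmanFE_norm_le hTm) F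
  set Gs := Submodule.orthogonalProjectionOnto (U.eqLocus (1 : Lp ℝ 2 m →L[ℝ] Lp ℝ 2 m)) F with hGs
  -- the projection is a fixed point of U
  have hfixed : Lp.compMeasurePreserving T hTm (Gs : Lp ℝ 2 m) = (Gs : Lp ℝ 2 m) := by
    have h := Gs.2
    rw [LinearMap.mem_eqLocus] at h
    simpa [hU, koopmanFE_apply] using h
  have hGcomp : (⇑(Gs : Lp ℝ 2 m)) ∘ T =ᵐ[m] ⇑(Gs : Lp ℝ 2 m) := by
    have h1 := Lp.coeFn_compMeasurePreserving (Gs : Lp ℝ 2 m) hTm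
    rw [hfixed] at h1
    exact h1.symm
  obtain ⟨c₀, hc₀⟩ := hT.ae_eq_const_of_ae_eq_comp₀
    (Lp.aestronglyMeasurable ((Gs : Lp ℝ 2 m))).aemeasurable.nullMeasurable hGcomp
  -- identify the constant with the space average of f
  have hones : MemLp (fun _ : α => (1:ℝ)) 2 m := memLp_const 1
  set eone : Lp ℝ 2 m := hones.toLp _ with heone
  have honemem : eone ∈ U.eqLocus (1 : Lp ℝ 2 m →L[ℝ] Lp ℝ 2 m) := by
    rw [LinearMap.mem_eqLocus]
    show U eone = (1 : Lp ℝ 2 m →L[ℝ] Lp ℝ 2 m) eone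
    rw [ContinuousLinearMap.one_apply]
    show Lp.compMeasurePreserving T hTm eone = eone
    apply Lp.ext
    have h1 := Lp.coeFn_compMeasurePreserving eone hTm
    have h2 := hones.coeFn_toLp
    have h3 : ⇑eone ∘ T =ᵐ[m] (fun _ => (1:ℝ)) ∘ T := hTm.quasiMeasurePreserving.ae_eq h2
    exact (h1.trans h3).trans h2.symm
  have hGint : Integrable (⇑(Gs : Lp ℝ 2 m)) m :=
    (Lp.memLp (Gs : Lp ℝ 2 m)).integrable one_le_two
  have hFint : Integrable (⇑F) m := (Lp.memLp F).integrable one_le_two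
  have hinner : inner (𝕜 := ℝ) eone (F - (Gs : Lp ℝ 2 m)) = (0:ℝ) :=
    (Submodule.mem_orthogonal _ _).1
      (Submodule.sub_starProjection_mem_orthogonal
        (K := U.eqLocus (1 : Lp ℝ 2 m →L[ℝ] Lp ℝ 2 m)) F) eone honemem
  have hintF_G : ∫ a, (⇑F) a ∂m = ∫ a, (⇑(Gs : Lp ℝ 2 m)) a ∂m := by
    have hd := L2.inner_def (𝕜 := ℝ) eone (F - (Gs : Lp ℝ 2 m))
    rw [hinner] at hd
    have hae : (fun a => inner (𝕜 := ℝ) ((⇑eone) a) ((⇑(F - (Gs : Lp ℝ 2 m))) a))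
        =ᵐ[m] fun a => (⇑F) a - (⇑(Gs : Lp ℝ 2 m)) a := by
      filter_upwards [hones.coeFn_toLp, Lp.coeFn_sub F (Gs : Lp ℝ 2 m)] with a ha1 ha2
      simp only [RCLike.inner_apply, conj_trivial, ha2, Pi.sub_apply]
      rw [show (⇑eone) a = (1:ℝ) from ha1]
      ring
    rw [integral_congr_ae hae, integral_sub hFint hGint] at hd
    linarith
  have hc₀val : c₀ = ∫ q, f q ∂m := by
    have e1 : ∫ a, (⇑(Gs : Lp ℝ 2 m)) a ∂m = c₀ := by
      rw [integral_congr_ae hc₀]; simp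
    have e2 : ∫ a, (⇑F) a ∂m = ∫ q, f q ∂m := integral_congr_ae hmem.coeFn_toLp
    rw [← e1, ← hintF_G, e2]
  -- bridge between the Lp Birkhoff averages and pointwise Birkhoff averages
  have hiter : ∀ j : ℕ, ⇑((⇑U)^[j] F) =ᵐ[m] fun x => f (T^[j] x) := by
    intro j
    induction j with
    | zero => simpa using hmem.coeFn_toLp
    | succ j ih =>
      rw [Function.iterate_succ_apply']
      have h1 : ⇑(U ((⇑U)^[j] F)) =ᵐ[m] (⇑((⇑U)^[j] F)) ∘ T :=
        Lp.coeFn_compMeasurePreserving ((⇑U)^[j] F) hTm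
      have h2 : (⇑((⇑U)^[j] F)) ∘ T =ᵐ[m] (fun x => f (T^[j] x)) ∘ T :=
        hTm.quasiMeasurePreserving.ae_eq ih
      have h3 : ((fun x => f (T^[j] x)) ∘ T) = fun x => f (T^[j+1] x) := by
        funext x; simp [Function.iterate_succ_apply]
      rw [← h3]
      exact h1.trans h2
  have hbridge : ∀ n : ℕ,
      ⇑(birkhoffAverage ℝ (⇑U) _root_.id n F) =ᵐ[m] birkhoffAverage ℝ T f n := by
    intro n
    have hsum : ⇑(birkhoffSum (⇑U) _root_.id n F) =ᵐ[m] birkhoffSum T f n := by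
      induction n with
      | zero =>
        simp only [birkhoffSum_zero']
        filter_upwards [Lp.coeFn_zero (E := ℝ) (p := 2) (μ := m)] with x hx
        simpa using hx
      | succ n ih =>
        have e1 : birkhoffSum (⇑U) _root_.id (n+1) F
            = birkhoffSum (⇑U) _root_.id n F + (⇑U)^[n] F := by
          rw [birkhoffSum_succ]; rfl
        rw [e1]
        filter_upwards [Lp.coeFn_add (birkhoffSum (⇑U) _root_.id n F) ((⇑U)^[n] F),
          ih, hiter n] with x h1 h2 h3
        rw [h1, Pi.add_apply, h2, h3, birkhoffSum_succ]
    have h1 := Lp.coeFn_smul ((n:ℝ)⁻¹) (birkhoffSum (⇑U) _root_.id n F)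
    have e2 : birkhoffAverage ℝ (⇑U) _root_.id n F
        = (n:ℝ)⁻¹ • birkhoffSum (⇑U) _root_.id n F := rfl
    rw [e2]
    filter_upwards [h1, hsum] with x hx1 hx2
    rw [hx1, Pi.smul_apply, hx2]
    rfl
  -- conclusion
  set c := ∫ q, f q ∂m with hc
  have hGc : ⇑(Gs : Lp ℝ 2 m) =ᵐ[m] fun _ => c := by
    rw [hc₀val] at hc₀
    exact hc₀
  have hnorm0 : Filter.Tendsto
      (fun n => ‖birkhoffAverage ℝ (⇑U) _root_.id n F - (Gs : Lp ℝ 2 m)‖) atTop (𝓝 0) := by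
    rw [← tendsto_iff_norm_sub_tendsto_zero]
    exact hvn
  have key : ∀ n : ℕ, ∫ p, |birkhoffAverage ℝ T f n p - c| ∂m
      ≤ ‖birkhoffAverage ℝ (⇑U) _root_.id n F - (Gs : Lp ℝ 2 m)‖ := by
    intro n
    set Δ : Lp ℝ 2 m := birkhoffAverage ℝ (⇑U) _root_.id n F - (Gs : Lp ℝ 2 m) with hΔ
    have hae : ⇑Δ =ᵐ[m] fun p => birkhoffAverage ℝ T f n p - c := by
      filter_upwards [Lp.coeFn_sub (birkhoffAverage ℝ (⇑U) _root_.id n F) (Gs : Lp ℝ 2 m),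
        hbridge n, hGc] with p h1 h2 h3
      rw [hΔ, h1, Pi.sub_apply, h2, h3]
    have hcont : Continuous fun p => birkhoffAverage ℝ T f n p - c :=
      (continuous_birkhoffAverageFE hTc hf n).sub continuous_const
    have hb2 : ∀ p, |birkhoffAverage ℝ T f n p - c| ≤ C + |c| := fun p =>
      (abs_sub _ _).trans (add_le_add (abs_birkhoffAverage_leFE T f hC hfb n p) le_rfl)
    have hint : Integrable (fun p => birkhoffAverage ℝ T f n p - c) m :=
      integrable_of_bounded_smFE hcont.aestronglyMeasurable hb2
    have h1 : ENNReal.ofReal (∫ p, |birkhoffAverage ℝ T f n p - c| ∂m)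
        = eLpNorm (fun p => birkhoffAverage ℝ T f n p - c) 1 m := by
      rw [eLpNorm_one_eq_lintegral_enorm, ← ofReal_integral_norm_eq_lintegral_enorm hint]
      simp [Real.norm_eq_abs]
    have h2 : eLpNorm (fun p => birkhoffAverage ℝ T f n p - c) 2 m = ENNReal.ofReal ‖Δ‖ := by
      rw [← eLpNorm_congr_ae hae, Lp.norm_def, ENNReal.ofReal_toReal (Lp.eLpNorm_ne_top Δ)]
    have h3 : eLpNorm (fun p => birkhoffAverage ℝ T f n p - c) 1 m
        ≤ eLpNorm (fun p => birkhoffAverage ℝ T f n p - c) 2 m :=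
      eLpNorm_le_eLpNorm_of_exponent_le one_le_two hcont.aestronglyMeasurable
    have h4 : ENNReal.ofReal (∫ p, |birkhoffAverage ℝ T f n p - c| ∂m)
        ≤ ENNReal.ofReal ‖Δ‖ := by
      rw [h1, ← h2]; exact h3
    exact (ENNReal.ofReal_le_ofReal_iff (norm_nonneg _)).1 h4
  exact squeeze_zero (fun n => integral_nonneg fun p => abs_nonneg _) key hnorm0

end MeanErgodic

section AuxSM

lemma stronglyMeasurable_birkhoffAverageFE {α : Type*} [MeasurableSpace α] {T : α → α}
    (hTm : Measurable T) {f : α → ℝ} (hf : StronglyMeasurable f) (n : ℕ) :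
    StronglyMeasurable (birkhoffAverage ℝ T f n) := by
  have h0 := Finset.stronglyMeasurable_sum (Finset.range n)
    (fun i _ => hf.comp_measurable (hTm.iterate i))
  have h : StronglyMeasurable (birkhoffSum T f n) := by
    have he : birkhoffSum T f n = ∑ i ∈ Finset.range n, f ∘ T^[i] := by
      funext x
      simp [birkhoffSum, Finset.sum_apply, Function.comp]
    rw [he]
    exact h0
  unfold birkhoffAverage
  simp only [smul_eq_mul]
  exact h.const_mul _

end AuxSM

open MeasureTheory

/-- A topological dynamical system is uniquely ergodic if it has exactly one
invariant Borel probability measure. -/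
def UniquelyErgodic {Y : Type*} [MeasurableSpace Y] (S : Y → Y) : Prop :=
  ∃! μ : Measure Y, IsProbabilityMeasure μ ∧ Measure.map S μ = μ

/-- Furstenberg's criterion: an ergodic compact group extension of a uniquely
ergodic system is uniquely ergodic. -/
theorem ergodic_group_extension_uniquely_ergodic
    {Y : Type*} [MetricSpace Y] [CompactSpace Y] [MeasurableSpace Y] [BorelSpace Y]
    (S : Y → Y) (hS : Continuous S) (hue : UniquelyErgodic S)
    (ν : Measure Y) [IsProbabilityMeasure ν] (hν : Measure.map S ν = ν)
    (K : Type*) [AddCommGroup K] [TopologicalSpace K] [IsTopologicalAddGroup K]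
    [CompactSpace K] [TopologicalSpace.MetrizableSpace K] [MeasurableSpace K] [BorelSpace K]
    (mK : Measure K) [mK.IsAddHaarMeasure] [IsProbabilityMeasure mK]
    (ρ : Y → K) (hρ : Continuous ρ)
    (hT : Ergodic (fun p : Y × K => (S p.1, p.2 + ρ p.1)) (ν.prod mK)) :
    UniquelyErgodic (fun p : Y × K => (S p.1, p.2 + ρ p.1)) := by
  letI : MetricSpace K := TopologicalSpace.metrizableSpaceMetric K
  set T : Y × K → Y × K := fun p => (S p.1, p.2 + ρ p.1) with hTdef
  have hTcont : Continuous T :=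
    (hS.comp continuous_fst).prodMk (continuous_snd.add (hρ.comp continuous_fst))
  have hTmeas : Measurable T := hTcont.measurable
  set m : Measure (Y × K) := ν.prod mK with hm
  have hTm : MeasurePreserving T m m := hT.toMeasurePreserving
  refine ⟨m, ⟨inferInstance, hTm.map_eq⟩, ?_⟩
  rintro μ ⟨hμp, hμinv⟩
  -- the projection of μ to Y is ν, by unique ergodicity of the base
  have hproj : Measure.map Prod.fst μ = ν := by
    have hpm : IsProbabilityMeasure (Measure.map (Prod.fst : Y × K → Y) μ) :=
      Measure.isProbabilityMeasure_map measurable_fst.aemeasurable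
    have hinv2 : Measure.map S (Measure.map Prod.fst μ) = Measure.map Prod.fst μ := by
      rw [Measure.map_map hS.measurable measurable_fst]
      have hcomp : S ∘ (Prod.fst : Y × K → Y) = Prod.fst ∘ T := rfl
      rw [hcomp, ← Measure.map_map measurable_fst hTmeas, hμinv]
    obtain ⟨μ₀, -, huniq⟩ := hue
    exact (huniq _ ⟨hpm, hinv2⟩).trans (huniq ν ⟨inferInstance, hν⟩).symm
  -- main analytic claim: integrals of continuous functions agree
  have main : ∀ g : Y × K → ℝ, Continuous g → ∫ p, g p ∂μ = ∫ p, g p ∂m := by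
    intro g hg
    obtain ⟨Cg, hCg0, hCgb⟩ : ∃ C : ℝ, 0 ≤ C ∧ ∀ p, |g p| ≤ C := by
      refine ⟨‖BoundedContinuousFunction.mkOfCompact ⟨g, hg⟩‖, norm_nonneg _, fun p => ?_⟩
      simpa [Real.norm_eq_abs] using
        BoundedContinuousFunction.norm_coe_le_norm (BoundedContinuousFunction.mkOfCompact ⟨g, hg⟩) p
    set c := ∫ q, g q ∂m with hc
    have hE : Filter.Tendsto (fun n => ∫ p, |birkhoffAverage ℝ T g n p - c| ∂m)
        Filter.atTop (nhds 0) := mean_ergodic_L1FE hTcont hT hg hCg0 hCgb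
    -- the key estimate
    have hkey : ∀ ε : ℝ, 0 < ε → |∫ p, g p ∂μ - c| ≤ 2 * ε := by
      intro ε hε
      -- a neighborhood of 0 on which translates of g move by at most ε
      obtain ⟨W, hWopen, hW0, hWsub⟩ : ∃ W : Set K, IsOpen W ∧ (0:K) ∈ W ∧
          ∀ (p : Y × K), ∀ w ∈ W, |g (p.1, p.2 + w) - g p| ≤ ε := by
        have hΦ : Continuous fun q : (Y × K) × K => |g (q.1.1, q.1.2 + q.2) - g q.1| := by
          apply Continuous.abs
          apply Continuous.sub
          · exact hg.comp ((continuous_fst.comp continuous_fst).prodMk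
              ((continuous_snd.comp continuous_fst).add continuous_snd))
          · exact hg.comp continuous_fst
        have hopen : IsOpen {q : (Y × K) × K | |g (q.1.1, q.1.2 + q.2) - g q.1| < ε} :=
          isOpen_lt hΦ continuous_const
        have hsub : (Set.univ : Set (Y × K)) ×ˢ ({0} : Set K)
            ⊆ {q : (Y × K) × K | |g (q.1.1, q.1.2 + q.2) - g q.1| < ε} := by
          rintro ⟨p, w⟩ ⟨-, hw⟩
          simp only [Set.mem_singleton_iff] at hw
          subst hw
          simpa using hε
        obtain ⟨V', W, hV'o, hWo, hV's, hWs, hsub2⟩ :=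
          generalized_tube_lemma isCompact_univ isCompact_singleton hopen hsub
        exact ⟨W, hWo, hWs rfl, fun p w hw =>
          le_of_lt (hsub2 (Set.mk_mem_prod (hV's (Set.mem_univ p)) hw))⟩
      have hmW0 : mK W ≠ 0 := (hWopen.measure_pos mK ⟨0, hW0⟩).ne'
      have hmWtop : mK W ≠ ⊤ := measure_ne_top mK W
      set cV : ℝ := (mK W).toReal with hcV
      have hcVpos : 0 < cV := ENNReal.toReal_pos hmW0 hmWtop
      have hcVne : cV ≠ 0 := hcVpos.ne'
      set FV : Y × K → ℝ := fun p => cV⁻¹ * ∫ w in W, g (p.1, p.2 + w) ∂mK with hFV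
      have hcont_slice : ∀ (p : Y × K), Continuous fun w : K => g (p.1, p.2 + w) := fun p =>
        hg.comp (continuous_const.prodMk (continuous_const.add continuous_id))
      have hint_slice : ∀ (p : Y × K), Integrable (fun w : K => g (p.1, p.2 + w)) mK := fun p =>
        integrable_of_bounded_smFE (hcont_slice p).aestronglyMeasurable (fun w => hCgb _)
      -- strong measurability of FV
      have hFVsm : StronglyMeasurable FV := by
        have hgc : Continuous fun q : (Y × K) × K => g (q.1.1, q.1.2 + q.2) :=
          hg.comp ((continuous_fst.comp continuous_fst).prodMk
            ((continuous_snd.comp continuous_fst).add continuous_snd))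
        have hind : StronglyMeasurable
            (Set.indicator ((Set.univ : Set (Y × K)) ×ˢ W)
              (fun q : (Y × K) × K => g (q.1.1, q.1.2 + q.2))) :=
          hgc.stronglyMeasurable.indicator (MeasurableSet.univ.prod hWopen.measurableSet)
        have h1 : StronglyMeasurable fun p : Y × K =>
            ∫ w, Set.indicator ((Set.univ : Set (Y × K)) ×ˢ W)
              (fun q : (Y × K) × K => g (q.1.1, q.1.2 + q.2)) (p, w) ∂mK :=
          hind.integral_prod_right'
        have h3 : FV = fun p : Y × K => cV⁻¹ *
            ∫ w, Set.indicator ((Set.univ : Set (Y × K)) ×ˢ W)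
              (fun q : (Y × K) × K => g (q.1.1, q.1.2 + q.2)) (p, w) ∂mK := by
          funext p
          show cV⁻¹ * (∫ w in W, g (p.1, p.2 + w) ∂mK) = _
          congr 1
          rw [← integral_indicator hWopen.measurableSet]
          congr 1
          funext w
          by_cases hw : w ∈ W <;> simp [Set.indicator, hw]
        rw [h3]
        exact h1.const_mul _
      -- bound on FV
      have hFVb : ∀ p, |FV p| ≤ Cg := by
        intro p
        have h1 : ‖∫ w in W, g (p.1, p.2 + w) ∂mK‖ ≤ Cg * cV := by
          have := norm_setIntegral_le_of_norm_le_const (μ := mK)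
            (lt_top_iff_ne_top.2 hmWtop)
            (f := fun w : K => g (p.1, p.2 + w))
            (fun w _ => by simpa [Real.norm_eq_abs] using hCgb (p.1, p.2 + w))
          simpa [hcV, mul_comm, measureReal_def] using this
        show |cV⁻¹ * ∫ w in W, g (p.1, p.2 + w) ∂mK| ≤ Cg
        rw [abs_mul, abs_inv, abs_of_pos hcVpos]
        calc cV⁻¹ * |∫ w in W, g (p.1, p.2 + w) ∂mK| ≤ cV⁻¹ * (Cg * cV) := by
              apply mul_le_mul_of_nonneg_left _ (by positivity)
              simpa [Real.norm_eq_abs] using h1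
          _ = Cg := by field_simp
      -- FV is uniformly close to g
      have hFVg : ∀ p, |FV p - g p| ≤ ε := by
        intro p
        have hconstint : IntegrableOn (fun _ : K => g p) W mK :=
          integrableOn_const hmWtop
        have hsub : FV p - g p = cV⁻¹ * ∫ w in W, (g (p.1, p.2 + w) - g p) ∂mK := by
          rw [integral_sub ((hint_slice p).integrableOn) hconstint, setIntegral_const,
            smul_eq_mul]
          show cV⁻¹ * (∫ w in W, g (p.1, p.2 + w) ∂mK) - g p = _
          rw [mul_sub, measureReal_def, ← hcV, ← mul_assoc, inv_mul_cancel₀ hcVne, one_mul]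
        rw [hsub, abs_mul, abs_inv, abs_of_pos hcVpos]
        have h1 : ‖∫ w in W, (g (p.1, p.2 + w) - g p) ∂mK‖ ≤ ε * cV := by
          have := norm_setIntegral_le_of_norm_le_const (μ := mK)
            (lt_top_iff_ne_top.2 hmWtop)
            (f := fun w : K => g (p.1, p.2 + w) - g p)
            (fun w hw => by simpa [Real.norm_eq_abs] using hWsub p w hw)
          simpa [hcV, mul_comm, measureReal_def] using this
        calc cV⁻¹ * |∫ w in W, (g (p.1, p.2 + w) - g p) ∂mK| ≤ cV⁻¹ * (ε * cV) := by
              apply mul_le_mul_of_nonneg_left _ (by positivity)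
              simpa [Real.norm_eq_abs] using h1
          _ = ε := by field_simp
      -- fiberwise L¹ errors
      set Dn : ℕ → Y → ℝ := fun n y => ∫ k, |birkhoffAverage ℝ T g n (y, k) - c| ∂mK with hDn
      have hAc_cont : ∀ n : ℕ, Continuous fun p : Y × K => |birkhoffAverage ℝ T g n p - c| :=
        fun n => ((continuous_birkhoffAverageFE hTcont hg n).sub continuous_const).abs
      have hAc_b : ∀ (n : ℕ) (p : Y × K), |birkhoffAverage ℝ T g n p - c| ≤ Cg + |c| := fun n p =>
        (abs_sub _ _).trans (add_le_add (abs_birkhoffAverage_leFE T g hCg0 hCgb n p) le_rfl)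
      have hDn_sm : ∀ n, StronglyMeasurable (Dn n) := fun n =>
        ((hAc_cont n).stronglyMeasurable).integral_prod_right'
      have hDn_nonneg : ∀ n y, 0 ≤ Dn n y := fun n y => integral_nonneg fun k => abs_nonneg _
      have hDn_b : ∀ n y, Dn n y ≤ Cg + |c| := by
        intro n y
        have hint : Integrable (fun k : K => |birkhoffAverage ℝ T g n (y, k) - c|) mK := by
          apply integrable_of_bounded_smFE
            ((hAc_cont n).comp (continuous_const.prodMk continuous_id)).aestronglyMeasurable
          intro k
          simpa using hAc_b n (y, k)
        calc Dn n y ≤ ∫ _ : K, (Cg + |c|) ∂mK :=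
              integral_mono hint (integrable_const _) (fun k => hAc_b n (y, k))
          _ = Cg + |c| := by simp
      -- pointwise domination of the averages of FV
      have hpt : ∀ (n : ℕ) (p : Y × K), |birkhoffAverage ℝ T FV n p - c| ≤ cV⁻¹ * Dn n p.1 := by
        intro n p
        have htr : ∀ (j : ℕ) (w : K), T^[j] (p.1, p.2 + w)
            = ((T^[j] p).1, (T^[j] p).2 + w) := by
          intro j w
          have h0 := skew_iterate_translate S ρ j p.1 p.2 w
          rw [← hTdef] at h0
          simpa using h0
        have hcomm : ∀ j : ℕ, FV (T^[j] p)
            = cV⁻¹ * ∫ w in W, g (T^[j] (p.1, p.2 + w)) ∂mK := by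
          intro j
          show cV⁻¹ * (∫ w in W, g ((T^[j] p).1, (T^[j] p).2 + w) ∂mK) = _
          congr 1
          apply integral_congr_ae
          apply Filter.Eventually.of_forall
          intro w
          simp only [htr j w]
        have hIntj : ∀ j : ℕ, IntegrableOn (fun w => g (T^[j] (p.1, p.2 + w))) W mK := by
          intro j
          apply Integrable.integrableOn
          apply integrable_of_bounded_smFE _ (fun w => hCgb _)
          exact (hg.comp ((hTcont.iterate j).comp
            (continuous_const.prodMk (continuous_const.add continuous_id)))).aestronglyMeasurable
        have hstep1 : birkhoffAverage ℝ T FV n p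
            = cV⁻¹ * ∫ w in W, birkhoffAverage ℝ T g n (p.1, p.2 + w) ∂mK := by
          show (n:ℝ)⁻¹ • ∑ j ∈ Finset.range n, FV (T^[j] p)
              = cV⁻¹ * ∫ w in W, (n:ℝ)⁻¹ • ∑ j ∈ Finset.range n, g (T^[j] (p.1, p.2 + w)) ∂mK
          rw [Finset.sum_congr rfl (fun j _ => hcomm j), ← Finset.mul_sum, integral_smul,
            integral_finset_sum _ (fun j _ => hIntj j)]
          simp only [smul_eq_mul]
          ring
        have hAint : IntegrableOn (fun w => birkhoffAverage ℝ T g n (p.1, p.2 + w)) W mK := by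
          apply Integrable.integrableOn
          apply integrable_of_bounded_smFE _
            (fun w => abs_birkhoffAverage_leFE T g hCg0 hCgb n _)
          exact ((continuous_birkhoffAverageFE hTcont hg n).comp
            (continuous_const.prodMk (continuous_const.add continuous_id))).aestronglyMeasurable
        have hstep2 : birkhoffAverage ℝ T FV n p - c
            = cV⁻¹ * ∫ w in W, (birkhoffAverage ℝ T g n (p.1, p.2 + w) - c) ∂mK := by
          rw [integral_sub hAint (integrableOn_const hmWtop),
            setIntegral_const, smul_eq_mul, mul_sub, hstep1, measureReal_def, ← hcV, ← mul_assoc,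
            inv_mul_cancel₀ hcVne, one_mul]
        rw [hstep2, abs_mul, abs_inv, abs_of_pos hcVpos]
        apply mul_le_mul_of_nonneg_left _ (by positivity)
        have h1 : |∫ w in W, (birkhoffAverage ℝ T g n (p.1, p.2 + w) - c) ∂mK|
            ≤ ∫ w in W, |birkhoffAverage ℝ T g n (p.1, p.2 + w) - c| ∂mK := by
          simpa [Real.norm_eq_abs] using norm_integral_le_integral_norm (μ := mK.restrict W)
            (fun w => birkhoffAverage ℝ T g n (p.1, p.2 + w) - c)
        have hint2 : Integrable (fun w => |birkhoffAverage ℝ T g n (p.1, p.2 + w) - c|) mK := by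
          apply integrable_of_bounded_smFE
            ((hAc_cont n).comp
              (continuous_const.prodMk (continuous_const.add continuous_id))).aestronglyMeasurable
          intro w
          simpa using hAc_b n _
        have h2 : ∫ w in W, |birkhoffAverage ℝ T g n (p.1, p.2 + w) - c| ∂mK
            ≤ ∫ w, |birkhoffAverage ℝ T g n (p.1, p.2 + w) - c| ∂mK :=
          setIntegral_le_integral hint2 (Filter.Eventually.of_forall fun w => abs_nonneg _)
        have h3 : ∫ w, |birkhoffAverage ℝ T g n (p.1, p.2 + w) - c| ∂mK = Dn n p.1 := by
          rw [hDn]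
          simp only
          exact integral_add_left_eq_self (fun k => |birkhoffAverage ℝ T g n (p.1, k) - c|) p.2
        rw [h3] at h2
        linarith
      -- putting everything together
      have hFVint_μ : Integrable FV μ := integrable_of_bounded_smFE hFVsm.aestronglyMeasurable hFVb
      have hgint_μ : Integrable g μ := integrable_of_bounded_smFE hg.aestronglyMeasurable hCgb
      have hEbound : ∀ n : ℕ, n ≠ 0 → |∫ p, FV p ∂μ - c|
          ≤ cV⁻¹ * ∫ p, |birkhoffAverage ℝ T g n p - c| ∂m := by
        intro n hn
        have hAFV_sm : StronglyMeasurable (birkhoffAverage ℝ T FV n) :=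
          stronglyMeasurable_birkhoffAverageFE hTmeas hFVsm n
        have hAFV_b : ∀ p, |birkhoffAverage ℝ T FV n p| ≤ Cg :=
          abs_birkhoffAverage_leFE T FV hCg0 hFVb n
        have hAFVint : Integrable (fun p => birkhoffAverage ℝ T FV n p - c) μ :=
          integrable_of_bounded_smFE
            (hAFV_sm.aestronglyMeasurable.sub aestronglyMeasurable_const)
            (fun p => (abs_sub _ _).trans (add_le_add (hAFV_b p) le_rfl))
        have hAFVc : ∫ p, birkhoffAverage ℝ T FV n p ∂μ = ∫ p, FV p ∂μ :=
          integral_birkhoffAverage_eqFE hTmeas hμinv hFVsm hFVb hn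
        have heq : ∫ p, FV p ∂μ - c = ∫ p, (birkhoffAverage ℝ T FV n p - c) ∂μ := by
          rw [integral_sub (integrable_of_bounded_smFE hAFV_sm.aestronglyMeasurable hAFV_b)
            (integrable_const c), hAFVc, integral_const]
          simp
        have hRHSint : Integrable (fun p : Y × K => cV⁻¹ * Dn n p.1) μ := by
          apply integrable_of_bounded_smFE
            (AEStronglyMeasurable.const_mul
              (((hDn_sm n).comp_measurable measurable_fst).aestronglyMeasurable) _)
            (C := cV⁻¹ * (Cg + |c|))
          intro p
          simp only [Function.comp_apply]
          rw [abs_mul, abs_inv, abs_of_pos hcVpos, abs_of_nonneg (hDn_nonneg n p.1)]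
          exact mul_le_mul_of_nonneg_left (hDn_b n p.1) (by positivity)
        have h1 : |∫ p, FV p ∂μ - c| ≤ ∫ p, |birkhoffAverage ℝ T FV n p - c| ∂μ := by
          rw [heq]
          simpa [Real.norm_eq_abs] using norm_integral_le_integral_norm (μ := μ)
            (fun p => birkhoffAverage ℝ T FV n p - c)
        have h2 : ∫ p, |birkhoffAverage ℝ T FV n p - c| ∂μ ≤ ∫ p, cV⁻¹ * Dn n p.1 ∂μ :=
          integral_mono hAFVint.abs hRHSint (fun p => hpt n p)
        have h3 : ∫ p, cV⁻¹ * Dn n p.1 ∂μ = cV⁻¹ * ∫ p, Dn n p.1 ∂μ := integral_const_mul _ _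
        have h4 : ∫ p, Dn n p.1 ∂μ = ∫ y, Dn n y ∂ν := by
          rw [← hproj, integral_map measurable_fst.aemeasurable
            (hDn_sm n).aestronglyMeasurable]
        have h5 : ∫ y, Dn n y ∂ν = ∫ p, |birkhoffAverage ℝ T g n p - c| ∂m := by
          rw [hm]
          exact (integral_prod _ (integrable_of_bounded_smFE
            (hAc_cont n).aestronglyMeasurable
            (fun p => by rw [abs_abs]; exact hAc_b n p))).symm
        calc |∫ p, FV p ∂μ - c| ≤ ∫ p, |birkhoffAverage ℝ T FV n p - c| ∂μ := h1
          _ ≤ ∫ p, cV⁻¹ * Dn n p.1 ∂μ := h2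
          _ = cV⁻¹ * ∫ y, Dn n y ∂ν := by rw [h3, h4]
          _ = cV⁻¹ * ∫ p, |birkhoffAverage ℝ T g n p - c| ∂m := by rw [h5]
      have hlim : Filter.Tendsto (fun n => cV⁻¹ * ∫ p, |birkhoffAverage ℝ T g n p - c| ∂m)
          Filter.atTop (nhds 0) := by
        have h0 := hE.const_mul cV⁻¹
        simpa using h0
      have hFVc : |∫ p, FV p ∂μ - c| ≤ 0 :=
        ge_of_tendsto hlim (Filter.eventually_atTop.2 ⟨1, fun n hn => hEbound n (by omega)⟩)
      have hdiff : |∫ p, g p ∂μ - ∫ p, FV p ∂μ| ≤ ε := by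
        rw [← integral_sub hgint_μ hFVint_μ]
        have h1 : |∫ p, (g p - FV p) ∂μ| ≤ ∫ p, |g p - FV p| ∂μ := by
          simpa [Real.norm_eq_abs] using norm_integral_le_integral_norm (μ := μ)
            (fun p => g p - FV p)
        have h2 : ∫ p, |g p - FV p| ∂μ ≤ ∫ _ : Y × K, ε ∂μ :=
          integral_mono (hgint_μ.sub hFVint_μ).abs (integrable_const ε)
            (fun p => by rw [abs_sub_comm]; exact hFVg p)
        have h3 : ∫ _ : Y × K, ε ∂μ = ε := by simp
        linarith
      calc |∫ p, g p ∂μ - c|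
          = |(∫ p, g p ∂μ - ∫ p, FV p ∂μ) + (∫ p, FV p ∂μ - c)| := by ring_nf
        _ ≤ |∫ p, g p ∂μ - ∫ p, FV p ∂μ| + |∫ p, FV p ∂μ - c| := abs_add_le _ _
        _ ≤ ε + 0 := add_le_add hdiff hFVc
        _ ≤ 2 * ε := by linarith
    have habs : |∫ p, g p ∂μ - c| = 0 := by
      by_contra h
      have hpos : 0 < |∫ p, g p ∂μ - c| :=
        lt_of_le_of_ne (abs_nonneg _) (Ne.symm h)
      have h4 := hkey (|∫ p, g p ∂μ - c| / 4) (by positivity)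
      linarith
    have := abs_eq_zero.1 habs
    linarith [this]
  -- conclude equality of measures via bounded continuous functions
  apply ext_of_forall_lintegral_eq_of_IsFiniteMeasure
  intro f
  have hfr : Continuous (NNReal.toReal ∘ ⇑f) := NNReal.continuous_coe.comp f.continuous
  have h1 : ∫ p, (NNReal.toReal ∘ ⇑f) p ∂μ = ∫ p, (NNReal.toReal ∘ ⇑f) p ∂m := main _ hfr
  have h2 : ∀ (μ' : Measure (Y × K)), IsProbabilityMeasure μ' →
      ∫⁻ p, (f p : ℝ≥0∞) ∂μ' = ENNReal.ofReal (∫ p, (NNReal.toReal ∘ ⇑f) p ∂μ') := by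
    intro μ' hμ'
    rw [ofReal_integral_eq_lintegral_ofReal (f.integrable_of_nnreal μ')
      (Filter.Eventually.of_forall fun p => NNReal.coe_nonneg _)]
    congr 1
    funext p
    simp [Function.comp, ENNReal.ofReal_coe_nnreal]
  rw [h2 μ hμp, h2 m inferInstance, h1]
end

section
/- Let (Y, S) be uniquely ergodic and (Y', S') a topological system that is orbit equivalent to (Y, S) via a homeomorphism h : Y → Y' (i.e., h maps S-orbits onto S'-orbits). If additionally (Y', S') is a minimal Cantor system strong orbit equivalent to (Y, S), then (Y', S') is uniquely ergodic, and the map sending an S'-invariant measure ν' to its corresponding S-invariant measure under the orbit equivalence is a bijection on invariant measures. -/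
open MeasureTheory

section Aux
variable {Z : Type*} [TopologicalSpace Z] [MeasurableSpace Z] [BorelSpace Z]

lemma continuous_toEquiv_zpow (T : Z ≃ₜ Z) (n : ℤ) : Continuous ⇑(T.toEquiv ^ n) := by
  induction n using Int.induction_on with
  | zero => simpa using continuous_id
  | succ k ih =>
      have : (T.toEquiv ^ ((k : ℤ) + 1)) = T.toEquiv ^ (k : ℤ) * T.toEquiv := zpow_add_one _ _
      rw [this]
      simpa [Equiv.Perm.coe_mul] using ih.comp T.continuous
  | pred k ih =>
      have : (T.toEquiv ^ (-(k : ℤ) - 1)) = T.toEquiv ^ (-(k : ℤ)) * T.toEquiv⁻¹ :=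
        zpow_sub_one _ _
      rw [this]
      have hsymm : ⇑(T.toEquiv⁻¹) = ⇑T.symm := rfl
      simpa [Equiv.Perm.coe_mul, hsymm] using ih.comp T.symm.continuous

lemma map_toEquiv_zpow (T : Z ≃ₜ Z) (ν : Measure Z) (hν : ν.map T = ν) (n : ℤ) :
    ν.map ⇑(T.toEquiv ^ n) = ν := by
  have hsymm : ν.map ⇑T.symm = ν := by
    conv_lhs => rw [← hν]
    rw [Measure.map_map T.symm.continuous.measurable T.continuous.measurable]
    simp
  induction n using Int.induction_on with
  | zero => simpa using Measure.map_id
  | succ k ih =>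
      have he : (T.toEquiv ^ ((k : ℤ) + 1)) = T.toEquiv ^ (k : ℤ) * T.toEquiv := zpow_add_one _ _
      have hc : ⇑(T.toEquiv ^ (k : ℤ) * T.toEquiv) = ⇑(T.toEquiv ^ (k : ℤ)) ∘ ⇑T := rfl
      rw [he, hc, ← Measure.map_map (continuous_toEquiv_zpow T k).measurable
        T.continuous.measurable]
      rw [show ν.map ⇑T = ν from hν, ih]
  | pred k ih =>
      have he : (T.toEquiv ^ (-(k : ℤ) - 1)) = T.toEquiv ^ (-(k : ℤ)) * T.toEquiv⁻¹ :=
        zpow_sub_one _ _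
      have hc : ⇑(T.toEquiv ^ (-(k : ℤ)) * T.toEquiv⁻¹) = ⇑(T.toEquiv ^ (-(k : ℤ))) ∘ ⇑T.symm :=
        rfl
      rw [he, hc, ← Measure.map_map (continuous_toEquiv_zpow T _).measurable
        T.symm.continuous.measurable, hsymm, ih]

/-- Key full-group lemma: if `φ` is a homeomorphism agreeing with `T ^ m' y` at each `y`,
and `ν` is `T`-invariant, then `ν` is `φ`-invariant. -/
lemma map_skew (T φ : Z ≃ₜ Z) (m' : Z → ℤ) (hm' : Measurable m')
    (hφ : ∀ y, φ y = (T.toEquiv ^ m' y) y) (ν : Measure Z) (hν : ν.map T = ν) :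
    ν.map φ = ν := by
  ext A hA
  rw [Measure.map_apply φ.continuous.measurable hA]
  have hpre : ⇑φ ⁻¹' A = ⋃ n : ℤ, (m' ⁻¹' {n} ∩ ⇑(T.toEquiv ^ n) ⁻¹' A) := by
    ext y
    simp only [Set.mem_preimage, Set.mem_iUnion, Set.mem_inter_iff, Set.mem_singleton_iff]
    constructor
    · intro hy; exact ⟨m' y, rfl, by rwa [← hφ]⟩
    · rintro ⟨n, rfl, hy⟩; rwa [hφ]
  have hmeasn : ∀ n : ℤ, MeasurableSet (m' ⁻¹' {n} ∩ ⇑(T.toEquiv ^ n) ⁻¹' A) := fun n =>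
    (hm' (measurableSet_singleton n)).inter ((continuous_toEquiv_zpow T n).measurable hA)
  have hdisj : Pairwise (Function.onFun Disjoint
      fun n : ℤ => m' ⁻¹' {n} ∩ ⇑(T.toEquiv ^ n) ⁻¹' A) := by
    intro a b hab
    refine Set.disjoint_left.2 ?_
    rintro y ⟨ha, -⟩ ⟨hb, -⟩
    exact hab (ha.symm.trans hb)
  rw [hpre, measure_iUnion hdisj hmeasn]
  -- now each term equals ν (B n) where B n = φ '' (m' ⁻¹' {n}) ∩ A
  set B : ℤ → Set Z := fun n => ⇑φ '' (m' ⁻¹' {n}) ∩ A with hB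
  have himg : ∀ n : ℤ, ⇑φ '' (m' ⁻¹' {n}) = ⇑(T.toEquiv ^ n) '' (m' ⁻¹' {n}) := by
    intro n
    apply Set.image_congr
    intro y hy
    simp only [Set.mem_preimage, Set.mem_singleton_iff] at hy
    rw [hφ, hy]
  have hBmeas : ∀ n : ℤ, MeasurableSet (B n) := by
    intro n
    refine MeasurableSet.inter ?_ hA
    rw [himg n, Equiv.image_eq_preimage_symm]
    have : ⇑(T.toEquiv ^ n).symm = ⇑(T.toEquiv ^ (-n)) := by
      rw [zpow_neg]; rfl
    rw [this]
    exact (continuous_toEquiv_zpow T (-n)).measurable (hm' (measurableSet_singleton n))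
  have hterm : ∀ n : ℤ, ν (m' ⁻¹' {n} ∩ ⇑(T.toEquiv ^ n) ⁻¹' A) = ν (B n) := by
    intro n
    have hmap := map_toEquiv_zpow T ν hν n
    have : ⇑(T.toEquiv ^ n) ⁻¹' (B n) = m' ⁻¹' {n} ∩ ⇑(T.toEquiv ^ n) ⁻¹' A := by
      rw [hB]
      simp only [Set.preimage_inter, himg]
      congr 1
      exact (T.toEquiv ^ n).preimage_image _
    rw [← this, ← Measure.map_apply (continuous_toEquiv_zpow T n).measurable (hBmeas n), hmap]
  rw [tsum_congr hterm]
  have hBdisj : Pairwise (Function.onFun Disjoint B) := by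
    intro a b hab
    refine Set.disjoint_left.2 ?_
    rintro y ⟨⟨x, hx, rfl⟩, -⟩ ⟨⟨x', hx', hxx'⟩, -⟩
    have := φ.injective hxx'
    subst this
    simp only [Set.mem_preimage, Set.mem_singleton_iff] at hx hx'
    exact hab (hx.symm.trans hx')
  rw [← measure_iUnion hBdisj hBmeas]
  congr 1
  rw [hB]
  rw [← Set.iUnion_inter, ← Set.image_iUnion]
  have : (⋃ n : ℤ, m' ⁻¹' {n} : Set Z) = Set.univ := by
    ext y; simp
  rw [this, Set.image_univ, φ.surjective.range_eq, Set.univ_inter]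

end Aux

section Main

variable {Y Y' : Type*}
    [MetricSpace Y] [CompactSpace Y] [MeasurableSpace Y] [BorelSpace Y]
    [MetricSpace Y'] [CompactSpace Y'] [MeasurableSpace Y'] [BorelSpace Y']

omit [CompactSpace Y] in
/-- A function continuous except possibly at one point is measurable. -/
lemma measurable_of_ae_continuousAt (f : Y → ℤ) (hf : ∃ y₀ : Y, ∀ y : Y, y ≠ y₀ → ContinuousAt f y) :
    Measurable f := by
  obtain ⟨y₀, hy₀⟩ := hf
  refine measurable_of_continuousOn_compl_singleton y₀ ?_
  intro y hy
  exact ((hy₀ y hy).continuousWithinAt)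

omit [CompactSpace Y] [CompactSpace Y'] in
/-- Pushing forward an invariant measure along the orbit equivalence yields an
invariant measure, given the strong orbit-equivalence cocycle relation. -/
lemma invariant_pushforward (S : Y ≃ₜ Y) (S' : Y' ≃ₜ Y') (h : Y ≃ₜ Y')
    (m : Y → ℤ) (hmmeas : Measurable m)
    (hhS : ∀ y : Y, h (S y) = (S'.toEquiv ^ m y) (h y))
    (ν : Measure Y') (hν : ν.map S' = ν) :
    (ν.map h.symm).map S = ν.map h.symm := by
  set φ : Y' ≃ₜ Y' := (h.symm.trans S).trans h with hφdef
  have hφ : ∀ y' : Y', φ y' = (S'.toEquiv ^ (m (h.symm y'))) y' := by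
    intro y'
    have := hhS (h.symm y')
    simpa [hφdef, Homeomorph.trans_apply] using this
  have hskew : ν.map φ = ν :=
    map_skew S' φ (m ∘ ⇑h.symm) (hmmeas.comp h.symm.continuous.measurable) hφ ν hν
  have hcomp : ⇑S ∘ ⇑h.symm = ⇑h.symm ∘ ⇑φ := by
    funext y'
    simp [hφdef, Homeomorph.trans_apply]
  rw [Measure.map_map S.continuous.measurable h.symm.continuous.measurable, hcomp,
    ← Measure.map_map h.symm.continuous.measurable φ.continuous.measurable, hskew]

end Main

/-- Unique ergodicity transfers through (strong) orbit equivalence: if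
`(Y, S)` is uniquely ergodic and `h : Y ≃ₜ Y'` is an orbit equivalence onto a
minimal Cantor system `(Y', S')` which is moreover a strong orbit equivalence,
then `(Y', S')` is uniquely ergodic, and pulling back invariant measures along
`h` is a bijection between the invariant probability measures. -/
theorem uniquely_ergodic_of_strong_orbit_equivalence
    {Y Y' : Type*}
    [MetricSpace Y] [CompactSpace Y] [MeasurableSpace Y] [BorelSpace Y]
    [MetricSpace Y'] [CompactSpace Y'] [MeasurableSpace Y'] [BorelSpace Y']
    [TotallyDisconnectedSpace Y']
    (S : Y ≃ₜ Y) (S' : Y' ≃ₜ Y') (h : Y ≃ₜ Y')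
    (horb : ∀ y : Y,
      (⇑h) '' (Set.range fun n : ℤ => (S.toEquiv ^ n) y)
        = Set.range fun n : ℤ => (S'.toEquiv ^ n) (h y))
    (j m : Y → ℤ)
    (hj : ∃ y₀ : Y, ∀ y : Y, y ≠ y₀ → ContinuousAt j y)
    (hm : ∃ y₀ : Y, ∀ y : Y, y ≠ y₀ → ContinuousAt m y)
    (hTh : ∀ y : Y, S' (h y) = h ((S.toEquiv ^ j y) y))
    (hhS : ∀ y : Y, h (S y) = (S'.toEquiv ^ m y) (h y))
    (hmin : ∀ y' : Y', Dense (Set.range fun n : ℤ => (S'.toEquiv ^ n) y'))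
    (hue : UniquelyErgodic (⇑S)) :
    UniquelyErgodic (⇑S') ∧
    Set.BijOn (fun ν : Measure Y' => ν.map h.symm)
      {ν : Measure Y' | IsProbabilityMeasure ν ∧ Measure.map (⇑S') ν = ν}
      {μ : Measure Y | IsProbabilityMeasure μ ∧ Measure.map (⇑S) μ = μ} := by
  obtain ⟨μ₀, ⟨hμ₀p, hμ₀inv⟩, hμ₀uniq⟩ := hue
  have hjmeas : Measurable j := measurable_of_ae_continuousAt j hj
  have hmmeas : Measurable m := measurable_of_ae_continuousAt m hm
  -- cancelling the pushforwards
  have hcancel : ∀ ν : Measure Y', (ν.map ⇑h.symm).map ⇑h = ν := by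
    intro ν
    rw [Measure.map_map h.continuous.measurable h.symm.continuous.measurable]
    have : ⇑h ∘ ⇑h.symm = id := by funext y'; simp
    rw [this, Measure.map_id]
  have hcancel' : ∀ μ : Measure Y, (μ.map ⇑h).map ⇑h.symm = μ := by
    intro μ
    rw [Measure.map_map h.symm.continuous.measurable h.continuous.measurable]
    have : ⇑h.symm ∘ ⇑h = id := by funext y; simp
    rw [this, Measure.map_id]
  -- direction 1: ν invariant under S' implies ν.map h.symm invariant under S
  have D1 : ∀ ν : Measure Y', IsProbabilityMeasure ν → ν.map ⇑S' = ν →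
      IsProbabilityMeasure (ν.map ⇑h.symm) ∧ (ν.map ⇑h.symm).map ⇑S = ν.map ⇑h.symm := by
    intro ν hp hi
    exact ⟨Measure.isProbabilityMeasure_map h.symm.continuous.measurable.aemeasurable,
      invariant_pushforward S S' h m hmmeas hhS ν hi⟩
  -- direction 2: μ invariant under S implies μ.map h invariant under S'
  have D2 : ∀ μ : Measure Y, IsProbabilityMeasure μ → μ.map ⇑S = μ →
      IsProbabilityMeasure (μ.map ⇑h) ∧ (μ.map ⇑h).map ⇑S' = μ.map ⇑h := by
    intro μ hp hi
    refine ⟨Measure.isProbabilityMeasure_map h.continuous.measurable.aemeasurable, ?_⟩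
    have hTh' : ∀ y' : Y', h.symm (S' y') = (S.toEquiv ^ (j (h.symm y'))) (h.symm y') := by
      intro y'
      have h1 := hTh (h.symm y')
      rw [h.apply_symm_apply] at h1
      rw [h1, h.symm_apply_apply]
    have h2 := invariant_pushforward S' S h.symm (fun y' => j (h.symm y'))
      (hjmeas.comp h.symm.continuous.measurable) hTh' μ hi
    simpa using h2
  constructor
  · refine ⟨μ₀.map ⇑h, ⟨(D2 μ₀ hμ₀p hμ₀inv).1, (D2 μ₀ hμ₀p hμ₀inv).2⟩, ?_⟩
    intro ν ⟨hνp, hνi⟩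
    have hD1 := D1 ν hνp hνi
    have : ν.map ⇑h.symm = μ₀ := hμ₀uniq _ ⟨hD1.1, hD1.2⟩
    rw [← this, hcancel ν]
  · refine ⟨?_, ?_, ?_⟩
    · intro ν ⟨hνp, hνi⟩
      exact ⟨(D1 ν hνp hνi).1, (D1 ν hνp hνi).2⟩
    · intro ν₁ _ ν₂ _ heq
      have : (ν₁.map ⇑h.symm).map ⇑h = (ν₂.map ⇑h.symm).map ⇑h := by
        simp only at heq; rw [heq]
      rwa [hcancel ν₁, hcancel ν₂] at this
    · intro μ ⟨hμp, hμi⟩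
      exact ⟨μ.map ⇑h, ⟨(D2 μ hμp hμi).1, (D2 μ hμp hμi).2⟩, hcancel' μ⟩
end
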